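/- Let n ≥ 1 and let {S₀, S₊₁, S₋₁, S₊, S₋, S_F} be a partition of S_{n,n} into (possibly empty) parts. An ASM A is S-compatible if A(s) = 0 for s ∈ S₀, A(s) = +1 for s ∈ S₊₁, A(s) = −1 for s ∈ S₋₁, A(s) ≥ 0 for s ∈ S₊, and A(s) ≤ 0 for s ∈ S₋. Then there exists an S-compatible alternating sign matrix of order n if and only if for all X₁, X₂ ⊆ S_{n,n} satisfying (X₁ ∪ X₂)ᶜ ⊆ S₀ ∪ S₋₁ ∪ S₋ and X₁ ∩ X₂ ⊆ S₀ ∪ S₊₁ ∪ S₊, the inequality σ₁(X₁) + σ₂(X₂) ≥ n + |S₋₁ ∩ (X₁ ∪ X₂)ᶜ| + |S₊₁ ∩ X₁ ∩ X₂| holds. -/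

import Mathlib

/-- The set of positions of an m×n matrix, 1-based: S_{m,n} = [m] × [n]. -/
def Smn (m n : ℕ) : Finset (ℕ × ℕ) := Finset.Icc 1 m ×ˢ Finset.Icc 1 n

/-- The horizontal prefix P¹_{i,j} = {(i,1), …, (i,j)}. -/
def hPrefix (i j : ℕ) : Finset (ℕ × ℕ) := {i} ×ˢ Finset.Icc 1 j

/-- The vertical prefix P²_{i,j} = {(1,j), …, (i,j)}. -/
def vPrefix (i j : ℕ) : Finset (ℕ × ℕ) := Finset.Icc 1 i ×ˢ {j}

/-- x̃(X), the sum of the entries of x at the positions in X. -/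
def fsum (x : ℕ × ℕ → ℤ) (X : Finset (ℕ × ℕ)) : ℤ := ∑ s ∈ X, x s

/-- A is a prefix-bounded matrix (PBM) of size m×n with respect to the
horizontal-prefix bounds Φ1 ≤ Γ1 and the vertical-prefix bounds Φ2 ≤ Γ2. -/
def IsPBM (m n : ℕ) (Φ1 Γ1 Φ2 Γ2 : ℕ × ℕ → ℤ) (A : ℕ × ℕ → ℤ) : Prop :=
  ∀ i ∈ Finset.Icc 1 m, ∀ j ∈ Finset.Icc 1 n,
    (Φ1 (i, j) ≤ fsum A (hPrefix i j) ∧ fsum A (hPrefix i j) ≤ Γ1 (i, j)) ∧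
    (Φ2 (i, j) ≤ fsum A (vPrefix i j) ∧ fsum A (vPrefix i j) ≤ Γ2 (i, j))

/-- Starting positions of the maximal horizontal segments of X ⊆ S_{m,n}. -/
def hStarts (X : Finset (ℕ × ℕ)) : Finset (ℕ × ℕ) :=
  X.filter (fun s => (s.1, s.2 - 1) ∉ X)

/-- Ending positions of the maximal horizontal segments of X ⊆ S_{m,n}. -/
def hEnds (X : Finset (ℕ × ℕ)) : Finset (ℕ × ℕ) :=
  X.filter (fun s => (s.1, s.2 + 1) ∉ X)

/-- Starting positions of the maximal vertical segments of X ⊆ S_{m,n}. -/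
def vStarts (X : Finset (ℕ × ℕ)) : Finset (ℕ × ℕ) :=
  X.filter (fun s => (s.1 - 1, s.2) ∉ X)

/-- Ending positions of the maximal vertical segments of X ⊆ S_{m,n}. -/
def vEnds (X : Finset (ℕ × ℕ)) : Finset (ℕ × ℕ) :=
  X.filter (fun s => (s.1 + 1, s.2) ∉ X)

/-- σ₁(X): the number of maximal horizontal segments of X. -/
def sigma1 (X : Finset (ℕ × ℕ)) : ℕ := (hStarts X).card

/-- σ₂(X): the number of maximal vertical segments of X. -/
def sigma2 (X : Finset (ℕ × ℕ)) : ℕ := (vStarts X).card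

/-- p*₁(X) = Σ [Φ¹(i,j₂) − Γ¹(i,j₁−1)] over the maximal horizontal segments
{(i,j₁),…,(i,j₂)} of X, with the convention Γ¹(i,0) = 0. -/
def pstar1 (Φ1 Γ1 : ℕ × ℕ → ℤ) (X : Finset (ℕ × ℕ)) : ℤ :=
  ∑ s ∈ hEnds X, Φ1 s -
    ∑ s ∈ hStarts X, (if s.2 = 1 then 0 else Γ1 (s.1, s.2 - 1))

/-- b*₁(X) = Σ [Γ¹(i,j₂) − Φ¹(i,j₁−1)] over the maximal horizontal segments
{(i,j₁),…,(i,j₂)} of X, with the convention Φ¹(i,0) = 0. -/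
def bstar1 (Φ1 Γ1 : ℕ × ℕ → ℤ) (X : Finset (ℕ × ℕ)) : ℤ :=
  ∑ s ∈ hEnds X, Γ1 s -
    ∑ s ∈ hStarts X, (if s.2 = 1 then 0 else Φ1 (s.1, s.2 - 1))

/-- p*₂(X) = Σ [Φ²(i₂,j) − Γ²(i₁−1,j)] over the maximal vertical segments
{(i₁,j),…,(i₂,j)} of X, with the convention Γ²(0,j) = 0. -/
def pstar2 (Φ2 Γ2 : ℕ × ℕ → ℤ) (X : Finset (ℕ × ℕ)) : ℤ :=
  ∑ s ∈ vEnds X, Φ2 s -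
    ∑ s ∈ vStarts X, (if s.1 = 1 then 0 else Γ2 (s.1 - 1, s.2))

/-- b*₂(X) = Σ [Γ²(i₂,j) − Φ²(i₁−1,j)] over the maximal vertical segments
{(i₁,j),…,(i₂,j)} of X, with the convention Φ²(0,j) = 0. -/
def bstar2 (Φ2 Γ2 : ℕ × ℕ → ℤ) (X : Finset (ℕ × ℕ)) : ℤ :=
  ∑ s ∈ vEnds X, Γ2 s -
    ∑ s ∈ vStarts X, (if s.1 = 1 then 0 else Φ2 (s.1 - 1, s.2))

/-- A is an alternating sign matrix (ASM) of order n: every horizontal and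
vertical prefix sum lies in {0, 1}, and every full row sum and full column
sum equals 1. -/
def IsASM (n : ℕ) (A : ℕ × ℕ → ℤ) : Prop :=
  (∀ i ∈ Finset.Icc 1 n, ∀ j ∈ Finset.Icc 1 n,
    (fsum A (hPrefix i j) = 0 ∨ fsum A (hPrefix i j) = 1) ∧
    (fsum A (vPrefix i j) = 0 ∨ fsum A (vPrefix i j) = 1)) ∧
  (∀ i ∈ Finset.Icc 1 n, fsum A (hPrefix i n) = 1) ∧
  (∀ j ∈ Finset.Icc 1 n, fsum A (vPrefix n j) = 1)

open Finset

lemma mem_Smn {n : ℕ} {t : ℕ × ℕ} :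
    t ∈ Smn n n ↔ (1 ≤ t.1 ∧ t.1 ≤ n) ∧ (1 ≤ t.2 ∧ t.2 ≤ n) := by
  simp [Smn, Finset.mem_product, Finset.mem_Icc]

lemma fsum_row (A : ℕ × ℕ → ℤ) (i : ℕ) (w : Finset ℕ) :
    fsum A ({i} ×ˢ w) = ∑ j ∈ w, A (i, j) := by
  rw [fsum, Finset.sum_product, Finset.sum_singleton]

lemma fsum_hPrefix (A : ℕ × ℕ → ℤ) (i j : ℕ) :
    fsum A (hPrefix i j) = ∑ l ∈ Finset.Icc 1 j, A (i, l) := fsum_row A i _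

lemma Icc1_split (a j : ℕ) (h : a ≤ j) :
    Finset.Icc 1 j = Finset.Icc 1 a ∪ Finset.Ioc a j := by
  ext x; simp [Finset.mem_Icc, Finset.mem_Ioc, Finset.mem_union]; omega

lemma Icc1_disj (a j : ℕ) : Disjoint (Finset.Icc 1 a) (Finset.Ioc a j) := by
  rw [Finset.disjoint_left]; intro x hx hx'
  simp [Finset.mem_Icc] at hx; simp [Finset.mem_Ioc] at hx'; omega

lemma fsum_hPrefix_split (A : ℕ × ℕ → ℤ) (i a j : ℕ) (h : a ≤ j) :
    fsum A (hPrefix i j) = fsum A (hPrefix i a) + fsum A ({i} ×ˢ Finset.Ioc a j) := by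
  rw [fsum_hPrefix, fsum_hPrefix, fsum_row, Icc1_split a j h,
    Finset.sum_union (Icc1_disj a j)]

lemma fsum_hPrefix_zero (A : ℕ × ℕ → ℤ) (i : ℕ) : fsum A (hPrefix i 0) = 0 := by
  rw [fsum_hPrefix]; simp

lemma fsum_hPrefix_pred (A : ℕ × ℕ → ℤ) (i j : ℕ) (hj : 1 ≤ j) :
    fsum A (hPrefix i j) = fsum A (hPrefix i (j - 1)) + A (i, j) := by
  rw [fsum_hPrefix_split A i (j-1) j (by omega)]
  have : Finset.Ioc (j-1) j = {j} := by ext x; simp [Finset.mem_Ioc]; omega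
  rw [this, fsum_row, Finset.sum_singleton]

lemma hStarts_subset (X : Finset (ℕ × ℕ)) : hStarts X ⊆ X := Finset.filter_subset _ _
lemma hEnds_subset (X : Finset (ℕ × ℕ)) : hEnds X ⊆ X := Finset.filter_subset _ _
lemma vStarts_subset (X : Finset (ℕ × ℕ)) : vStarts X ⊆ X := Finset.filter_subset _ _

lemma mem_hStarts {X : Finset (ℕ × ℕ)} {t : ℕ × ℕ} :
    t ∈ hStarts X ↔ t ∈ X ∧ (t.1, t.2 - 1) ∉ X := by simp [hStarts]
lemma mem_hEnds {X : Finset (ℕ × ℕ)} {t : ℕ × ℕ} :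
    t ∈ hEnds X ↔ t ∈ X ∧ (t.1, t.2 + 1) ∉ X := by simp [hEnds]
lemma mem_vStarts {X : Finset (ℕ × ℕ)} {t : ℕ × ℕ} :
    t ∈ vStarts X ↔ t ∈ X ∧ (t.1 - 1, t.2) ∉ X := by simp [vStarts]

section tele

variable {n : ℕ} {X : Finset (ℕ × ℕ)}

lemma bij_mem_left (hX : X ⊆ Smn n n) {t : ℕ × ℕ} (ht : t ∈ X \ hEnds X) :
    (t.1, t.2 + 1) ∈ X \ hStarts X := by
  rw [Finset.mem_sdiff, mem_hEnds] at ht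
  push_neg at ht
  rw [Finset.mem_sdiff, mem_hStarts]
  refine ⟨ht.2 ht.1, ?_⟩
  push_neg
  intro _
  simpa using ht.1

lemma bij_mem_right (hX : X ⊆ Smn n n) {u : ℕ × ℕ} (hu : u ∈ X \ hStarts X) :
    (u.1, u.2 - 1) ∈ X \ hEnds X := by
  rw [Finset.mem_sdiff, mem_hStarts] at hu
  push_neg at hu
  have hpm : (u.1, u.2 - 1) ∈ X := hu.2 hu.1
  have h2 : 1 ≤ u.2 - 1 := (mem_Smn.1 (hX hpm)).2.1
  rw [Finset.mem_sdiff, mem_hEnds]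
  refine ⟨hpm, ?_⟩
  push_neg
  intro _
  have : u.2 - 1 + 1 = u.2 := by omega
  rw [this]
  exact hu.1

lemma bij_right_inv (hX : X ⊆ Smn n n) {u : ℕ × ℕ} (hu : u ∈ X \ hStarts X) :
    ((u.1, u.2 - 1).1, (u.1, u.2 - 1).2 + 1) = u := by
  rw [Finset.mem_sdiff, mem_hStarts] at hu
  push_neg at hu
  have hpm : (u.1, u.2 - 1) ∈ X := hu.2 hu.1
  have h2 : 1 ≤ u.2 - 1 := (mem_Smn.1 (hX hpm)).2.1
  have : u.2 - 1 + 1 = u.2 := by omega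
  simp [this]

lemma sum_sdiff_ends_starts (hX : X ⊆ Smn n n) (g : ℕ × ℕ → ℤ) :
    ∑ t ∈ X \ hEnds X, g t = ∑ t ∈ X \ hStarts X, g (t.1, t.2 - 1) := by
  refine Finset.sum_nbij' (fun t => (t.1, t.2 + 1)) (fun u => (u.1, u.2 - 1))
    (fun t ht => bij_mem_left hX ht) (fun u hu => bij_mem_right hX hu)
    (fun t ht => by simp) (fun u hu => bij_right_inv hX hu) (fun t ht => by simp)

lemma card_sdiff_ends_starts (hX : X ⊆ Smn n n) :
    (X \ hEnds X).card = (X \ hStarts X).card := by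
  refine Finset.card_nbij' (fun t => (t.1, t.2 + 1)) (fun u => (u.1, u.2 - 1))
    (fun t ht => bij_mem_left hX ht) (fun u hu => bij_mem_right hX hu)
    (fun t ht => by simp) (fun u hu => bij_right_inv hX hu)

lemma card_hEnds_eq (hX : X ⊆ Smn n n) : (hEnds X).card = (hStarts X).card := by
  have h1 := Finset.card_sdiff_of_subset (hEnds_subset X)
  have h2 := Finset.card_sdiff_of_subset (hStarts_subset X)
  have h3 := Finset.card_le_card (hEnds_subset X)
  have h4 := Finset.card_le_card (hStarts_subset X)
  have h5 := card_sdiff_ends_starts hX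
  omega

lemma fsum_eq_ends_sub_starts (A : ℕ × ℕ → ℤ) (hX : X ⊆ Smn n n) :
    fsum A X = (∑ t ∈ hEnds X, fsum A (hPrefix t.1 t.2)) -
      ∑ t ∈ hStarts X, fsum A (hPrefix t.1 (t.2 - 1)) := by
  set g : ℕ × ℕ → ℤ := fun t => fsum A (hPrefix t.1 t.2) with hg
  have step : fsum A X = (∑ t ∈ X, g t) - ∑ t ∈ X, g (t.1, t.2 - 1) := by
    rw [← Finset.sum_sub_distrib]
    refine Finset.sum_congr rfl fun t ht => ?_
    have h1 : 1 ≤ t.2 := (mem_Smn.1 (hX ht)).2.1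
    have := fsum_hPrefix_pred A t.1 t.2 h1
    rw [Prod.mk.eta] at this
    simp only [hg]
    omega
  have e1 : (∑ t ∈ X, g t) = (∑ t ∈ X \ hEnds X, g t) + ∑ t ∈ hEnds X, g t :=
    (Finset.sum_sdiff (hEnds_subset X)).symm
  have e2 : (∑ t ∈ X, g (t.1, t.2 - 1)) =
      (∑ t ∈ X \ hStarts X, g (t.1, t.2 - 1)) + ∑ t ∈ hStarts X, g (t.1, t.2 - 1) :=
    (Finset.sum_sdiff (hStarts_subset X)).symm
  rw [step, e1, e2, ← sum_sdiff_ends_starts hX g]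
  ring

lemma fsum_le_sigma1 (A : ℕ × ℕ → ℤ) (hX : X ⊆ Smn n n)
    (hb : ∀ i ∈ Finset.Icc 1 n, ∀ j ∈ Finset.Icc 1 n,
      0 ≤ fsum A (hPrefix i j) ∧ fsum A (hPrefix i j) ≤ 1) :
    fsum A X ≤ (sigma1 X : ℤ) := by
  rw [fsum_eq_ends_sub_starts A hX]
  have h1 : (∑ t ∈ hEnds X, fsum A (hPrefix t.1 t.2)) ≤ (hEnds X).card := by
    calc (∑ t ∈ hEnds X, fsum A (hPrefix t.1 t.2)) ≤ ∑ t ∈ hEnds X, 1 := by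
          refine Finset.sum_le_sum fun t ht => ?_
          have htS := mem_Smn.1 (hX (hEnds_subset X ht))
          exact (hb t.1 (Finset.mem_Icc.2 ⟨htS.1.1, htS.1.2⟩)
            t.2 (Finset.mem_Icc.2 ⟨htS.2.1, htS.2.2⟩)).2
      _ = (hEnds X).card := by simp
  have h2 : 0 ≤ ∑ t ∈ hStarts X, fsum A (hPrefix t.1 (t.2 - 1)) := by
    refine Finset.sum_nonneg fun t ht => ?_
    have htS := mem_Smn.1 (hX (hStarts_subset X ht))
    rcases Nat.eq_or_lt_of_le htS.2.1 with h | h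
    · rw [← h]
      simp [fsum_hPrefix_zero]
    · exact (hb t.1 (Finset.mem_Icc.2 ⟨htS.1.1, htS.1.2⟩)
        (t.2 - 1) (Finset.mem_Icc.2 ⟨by omega, by omega⟩)).1
  have h3 : ((hEnds X).card : ℤ) = (sigma1 X : ℤ) := by
    rw [sigma1, card_hEnds_eq hX]
  omega

end tele

section swap

lemma mem_image_swap {X : Finset (ℕ × ℕ)} {u : ℕ × ℕ} :
    u ∈ X.image Prod.swap ↔ u.swap ∈ X := by
  rw [Finset.mem_image]
  constructor
  · rintro ⟨a, ha, rfl⟩; simpa using ha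
  · intro h; exact ⟨_, h, Prod.swap_swap u⟩

lemma image_swap_swap (X : Finset (ℕ × ℕ)) : (X.image Prod.swap).image Prod.swap = X := by
  ext u; rw [mem_image_swap, mem_image_swap, Prod.swap_swap]

lemma image_swap_subset_Smn {n : ℕ} {X : Finset (ℕ × ℕ)} (hX : X ⊆ Smn n n) :
    X.image Prod.swap ⊆ Smn n n := by
  intro u hu
  have := mem_Smn.1 (hX (mem_image_swap.1 hu))
  exact mem_Smn.2 ⟨this.2, this.1⟩

lemma hStarts_image_swap (X : Finset (ℕ × ℕ)) :
    hStarts (X.image Prod.swap) = (vStarts X).image Prod.swap := by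
  ext ⟨a, b⟩
  simp only [mem_hStarts, mem_image_swap, mem_vStarts]
  rfl

lemma sigma2_eq_sigma1_swap (X : Finset (ℕ × ℕ)) :
    sigma2 X = sigma1 (X.image Prod.swap) := by
  rw [sigma1, sigma2, hStarts_image_swap,
    Finset.card_image_of_injective _ Prod.swap_injective]

lemma sigma1_eq_sigma2_swap (X : Finset (ℕ × ℕ)) :
    sigma1 X = sigma2 (X.image Prod.swap) := by
  rw [sigma2_eq_sigma1_swap, image_swap_swap]

lemma fsum_image_swap (A : ℕ × ℕ → ℤ) (X : Finset (ℕ × ℕ)) :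
    fsum (fun t => A t.swap) (X.image Prod.swap) = fsum A X := by
  rw [fsum, fsum, Finset.sum_image (fun a _ b _ h => Prod.swap_injective h)]
  simp

lemma fsum_vPrefix_eq_swap (A : ℕ × ℕ → ℤ) (i j : ℕ) :
    fsum (fun t => A t.swap) (hPrefix i j) = fsum A (vPrefix j i) := by
  rw [fsum_hPrefix, fsum, vPrefix, Finset.sum_product]
  simp [Prod.swap]

lemma fsum_le_sigma2 {n : ℕ} {X : Finset (ℕ × ℕ)} (A : ℕ × ℕ → ℤ) (hX : X ⊆ Smn n n)
    (hb : ∀ i ∈ Finset.Icc 1 n, ∀ j ∈ Finset.Icc 1 n,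
      0 ≤ fsum A (vPrefix i j) ∧ fsum A (vPrefix i j) ≤ 1) :
    fsum A X ≤ (sigma2 X : ℤ) := by
  rw [← fsum_image_swap A X, sigma2_eq_sigma1_swap]
  refine fsum_le_sigma1 _ (image_swap_subset_Smn hX) ?_
  intro i hi j hj
  rw [fsum_vPrefix_eq_swap]
  exact hb j hj i hi

end swap

section submod

lemma sigma1_add_e (X : Finset (ℕ × ℕ)) :
    sigma1 X + (X.filter (fun t => (t.1, t.2 - 1) ∈ X)).card = X.card := by
  have := Finset.card_filter_add_card_filter_not
    (s := X) (p := fun t => (t.1, t.2 - 1) ∉ X)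
  simp only [not_not] at this
  exact this

lemma e_submod (A B : Finset (ℕ × ℕ)) :
    (A.filter (fun t => (t.1, t.2 - 1) ∈ A)).card +
      (B.filter (fun t => (t.1, t.2 - 1) ∈ B)).card ≤
    ((A ∪ B).filter (fun t => (t.1, t.2 - 1) ∈ A ∪ B)).card +
      ((A ∩ B).filter (fun t => (t.1, t.2 - 1) ∈ A ∩ B)).card := by
  have h1 : A.filter (fun t => (t.1, t.2 - 1) ∈ A) ∪ B.filter (fun t => (t.1, t.2 - 1) ∈ B)
      ⊆ (A ∪ B).filter (fun t => (t.1, t.2 - 1) ∈ A ∪ B) := by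
    intro t ht
    simp only [Finset.mem_union, Finset.mem_filter] at *
    tauto
  have h2 : A.filter (fun t => (t.1, t.2 - 1) ∈ A) ∩ B.filter (fun t => (t.1, t.2 - 1) ∈ B)
      = (A ∩ B).filter (fun t => (t.1, t.2 - 1) ∈ A ∩ B) := by
    ext t
    simp only [Finset.mem_inter, Finset.mem_filter]
    tauto
  calc (A.filter (fun t => (t.1, t.2 - 1) ∈ A)).card +
        (B.filter (fun t => (t.1, t.2 - 1) ∈ B)).card
      = (A.filter (fun t => (t.1, t.2 - 1) ∈ A) ∪ B.filter (fun t => (t.1, t.2 - 1) ∈ B)).card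
        + (A.filter (fun t => (t.1, t.2 - 1) ∈ A) ∩ B.filter (fun t => (t.1, t.2 - 1) ∈ B)).card
        := (Finset.card_union_add_card_inter _ _).symm
    _ ≤ _ := by
        rw [h2]
        exact Nat.add_le_add_right (Finset.card_le_card h1) _

lemma sigma1_submod (A B : Finset (ℕ × ℕ)) :
    sigma1 (A ∪ B) + sigma1 (A ∩ B) ≤ sigma1 A + sigma1 B := by
  have hA := sigma1_add_e A
  have hB := sigma1_add_e B
  have hU := sigma1_add_e (A ∪ B)
  have hI := sigma1_add_e (A ∩ B)
  have hc := Finset.card_union_add_card_inter A B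
  have he := e_submod A B
  omega

lemma sigma2_submod (A B : Finset (ℕ × ℕ)) :
    sigma2 (A ∪ B) + sigma2 (A ∩ B) ≤ sigma2 A + sigma2 B := by
  rw [sigma2_eq_sigma1_swap, sigma2_eq_sigma1_swap, sigma2_eq_sigma1_swap,
    sigma2_eq_sigma1_swap, Finset.image_union,
    Finset.image_inter _ _ Prod.swap_injective]
  exact sigma1_submod _ _

end submod

section sigmacomp

lemma sigma1_empty : sigma1 (∅ : Finset (ℕ × ℕ)) = 0 := by simp [sigma1, hStarts]
lemma sigma2_empty : sigma2 (∅ : Finset (ℕ × ℕ)) = 0 := by simp [sigma2, vStarts]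

lemma sigma1_Smn_le (n : ℕ) : sigma1 (Smn n n) ≤ n := by
  have h : hStarts (Smn n n) ⊆ Finset.Icc 1 n ×ˢ {1} := by
    intro t ht
    rw [mem_hStarts] at ht
    have h1 := mem_Smn.1 ht.1
    have h2 : t.2 = 1 := by
      by_contra hne
      exact ht.2 (mem_Smn.2 ⟨h1.1, by omega⟩)
    rw [Finset.mem_product]
    exact ⟨Finset.mem_Icc.2 ⟨h1.1.1, h1.1.2⟩, by simp [h2]⟩
  calc sigma1 (Smn n n) ≤ (Finset.Icc 1 n ×ˢ ({1} : Finset ℕ)).card := Finset.card_le_card h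
    _ = n := by simp [Finset.card_product]

lemma sigma2_Smn_le (n : ℕ) : sigma2 (Smn n n) ≤ n := by
  have h : vStarts (Smn n n) ⊆ ({1} : Finset ℕ) ×ˢ Finset.Icc 1 n := by
    intro t ht
    rw [mem_vStarts] at ht
    have h1 := mem_Smn.1 ht.1
    have h2 : t.1 = 1 := by
      by_contra hne
      exact ht.2 (mem_Smn.2 ⟨by omega, h1.2⟩)
    rw [Finset.mem_product]
    exact ⟨by simp [h2], Finset.mem_Icc.2 ⟨h1.2.1, h1.2.2⟩⟩
  calc sigma2 (Smn n n) ≤ (({1} : Finset ℕ) ×ˢ Finset.Icc 1 n).card := Finset.card_le_card h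
    _ = n := by simp [Finset.card_product]

lemma sigma1_rowIoc_le (i a b : ℕ) : sigma1 ({i} ×ˢ Finset.Ioc a b) ≤ 1 := by
  have h : hStarts ({i} ×ˢ Finset.Ioc a b) ⊆ {(i, a + 1)} := by
    intro t ht
    rw [mem_hStarts] at ht
    have h1 := ht.1
    rw [Finset.mem_product, Finset.mem_singleton, Finset.mem_Ioc] at h1
    have h2 : ¬ (t.1 = i ∧ a < t.2 - 1 ∧ t.2 - 1 ≤ b) := by
      intro hc
      exact ht.2 (by rw [Finset.mem_product]; simp [Finset.mem_Ioc]; omega)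
    simp only [Finset.mem_singleton]
    have : t.2 = a + 1 := by omega
    rw [Prod.ext_iff]
    exact ⟨h1.1, this⟩
  calc sigma1 _ ≤ ({(i, a+1)} : Finset (ℕ × ℕ)).card := Finset.card_le_card h
    _ = 1 := rfl

/-- core: starts of `Smn \ row-interval` are in column 1 or just after the interval -/
lemma hStarts_sdiff_core {n i a b : ℕ} {t : ℕ × ℕ}
    (ht : t ∈ hStarts (Smn n n \ ({i} ×ˢ Finset.Ioc a b))) :
    (t ∈ Smn n n ∧ t ∉ ({i} ×ˢ Finset.Ioc a b)) ∧ (t.2 = 1 ∨ t = (i, b + 1)) := by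
  obtain ⟨t1, t2⟩ := t
  rw [mem_hStarts, Finset.mem_sdiff] at ht
  refine ⟨ht.1, ?_⟩
  by_cases h1 : t2 = 1
  · exact Or.inl h1
  · right
    have hS := mem_Smn.1 ht.1.1
    simp only [Prod.fst, Prod.snd] at hS h1 ⊢
    have hpS : ((t1, t2 - 1) : ℕ × ℕ) ∈ Smn n n :=
      mem_Smn.2 ⟨hS.1, by constructor <;> omega⟩
    have hpC : ((t1, t2 - 1) : ℕ × ℕ) ∈ {i} ×ˢ Finset.Ioc a b := by
      by_contra hc
      exact ht.2 (Finset.mem_sdiff.2 ⟨hpS, hc⟩)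
    have htC := ht.1.2
    simp only [Finset.mem_product, Finset.mem_singleton, Finset.mem_Ioc,
      Prod.fst, Prod.snd] at hpC htC
    obtain ⟨he1, he2, he3⟩ : t1 = i ∧ a < t2 - 1 ∧ t2 - 1 ≤ b := ⟨hpC.1, hpC.2.1, hpC.2.2⟩
    subst he1
    have e3 : ¬(a < t2 ∧ t2 ≤ b) := fun hc => htC ⟨rfl, hc⟩
    have : t2 = b + 1 := by omega
    rw [this]

lemma sigma1_sdiff_le_general {n i a b : ℕ} :
    sigma1 (Smn n n \ ({i} ×ˢ Finset.Ioc a b)) ≤ n + 1 := by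
  have h : hStarts (Smn n n \ ({i} ×ˢ Finset.Ioc a b))
      ⊆ Finset.Icc 1 n ×ˢ {1} ∪ {(i, b + 1)} := by
    intro t ht
    have hc := hStarts_sdiff_core ht
    have hS := mem_Smn.1 hc.1.1
    rcases hc.2 with h1 | h1
    · exact Finset.mem_union_left _ (by rw [Finset.mem_product]; simp [Finset.mem_Icc]; omega)
    · exact Finset.mem_union_right _ (by simp [h1])
  calc sigma1 _ ≤ _ := Finset.card_le_card h
    _ ≤ (Finset.Icc 1 n ×ˢ ({1} : Finset ℕ)).card + ({((i : ℕ), b+1)} : Finset (ℕ × ℕ)).card :=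
        Finset.card_union_le _ _
    _ ≤ n + 1 := by simp [Finset.card_product]

lemma sigma1_sdiff_le_prefix {n i b : ℕ} (hi : i ∈ Finset.Icc 1 n) (hb : 1 ≤ b) :
    sigma1 (Smn n n \ ({i} ×ˢ Finset.Ioc 0 b)) ≤ n := by
  have h : hStarts (Smn n n \ ({i} ×ˢ Finset.Ioc 0 b))
      ⊆ ((Finset.Icc 1 n).erase i) ×ˢ {1} ∪ {(i, b + 1)} := by
    intro t ht
    have hc := hStarts_sdiff_core ht
    have hS := mem_Smn.1 hc.1.1
    rcases hc.2 with h1 | h1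
    · refine Finset.mem_union_left _ ?_
      rw [Finset.mem_product, Finset.mem_erase]
      have hti : t.1 ≠ i := by
        intro he
        exact hc.1.2 (by rw [Finset.mem_product]; simp [Finset.mem_Ioc, he]; omega)
      exact ⟨⟨hti, Finset.mem_Icc.2 ⟨hS.1.1, hS.1.2⟩⟩, by simp [h1]⟩
    · exact Finset.mem_union_right _ (by simp [h1])
  calc sigma1 _ ≤ _ := Finset.card_le_card h
    _ ≤ (((Finset.Icc 1 n).erase i) ×ˢ ({1} : Finset ℕ)).card + 1 := by
        refine le_trans (Finset.card_union_le _ _) ?_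
        simp
    _ ≤ n := by
        have hn : 1 ≤ n :=
          le_trans (Finset.mem_Icc.1 hi).1 (Finset.mem_Icc.1 hi).2
        rw [Finset.card_product, Finset.card_erase_of_mem hi]
        simp [Nat.card_Icc]
        omega

lemma sigma1_sdiff_le_suffix {n i a : ℕ} :
    sigma1 (Smn n n \ ({i} ×ˢ Finset.Ioc a n)) ≤ n := by
  have h : hStarts (Smn n n \ ({i} ×ˢ Finset.Ioc a n)) ⊆ Finset.Icc 1 n ×ˢ {1} := by
    intro t ht
    have hc := hStarts_sdiff_core ht
    have hS := mem_Smn.1 hc.1.1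
    rcases hc.2 with h1 | h1
    · rw [Finset.mem_product]; simp [Finset.mem_Icc]; omega
    · exfalso
      have : t.2 = n + 1 := by rw [h1]
      omega
  calc sigma1 _ ≤ _ := Finset.card_le_card h
    _ ≤ n := by simp [Finset.card_product]

lemma sigma1_sdiff_le_row {n i : ℕ} (hi : i ∈ Finset.Icc 1 n) (hn : 1 ≤ n) :
    sigma1 (Smn n n \ ({i} ×ˢ Finset.Ioc 0 n)) ≤ n - 1 := by
  have h : hStarts (Smn n n \ ({i} ×ˢ Finset.Ioc 0 n))
      ⊆ ((Finset.Icc 1 n).erase i) ×ˢ {1} := by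
    intro t ht
    have hc := hStarts_sdiff_core ht
    have hS := mem_Smn.1 hc.1.1
    rcases hc.2 with h1 | h1
    · rw [Finset.mem_product, Finset.mem_erase]
      have hti : t.1 ≠ i := by
        intro he
        exact hc.1.2 (by rw [Finset.mem_product]; simp [Finset.mem_Ioc, he]; omega)
      exact ⟨⟨hti, Finset.mem_Icc.2 ⟨hS.1.1, hS.1.2⟩⟩, by simp [h1]⟩
    · exfalso
      have : t.2 = n + 1 := by rw [h1]
      omega
  calc sigma1 _ ≤ _ := Finset.card_le_card h
    _ ≤ n - 1 := by
        rw [Finset.card_product, Finset.card_erase_of_mem hi]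
        simp [Nat.card_Icc]

end sigmacomp

section counting

variable {α : Type*} [DecidableEq α]

lemma card_inter_as_sum (T A : Finset α) :
    (T ∩ A).card = ∑ t ∈ T, if t ∈ A then 1 else 0 := by
  rw [← Finset.filter_mem_eq_inter, Finset.card_filter]

lemma card_inter_sdiff_add {T S B : Finset α} (hT : T ⊆ S) :
    (T ∩ (S \ B)).card + (T ∩ B).card = T.card := by
  have h : T ∩ (S \ B) = T \ B := by
    ext t
    simp only [Finset.mem_inter, Finset.mem_sdiff]
    exact ⟨fun h => ⟨h.1, h.2.2⟩, fun h => ⟨h.1, hT h.1, h.2⟩⟩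
  rw [h]
  exact Finset.card_sdiff_add_card_inter T B

lemma ineq_auxP (p1 p2 q1 q2 : Prop) [Decidable p1] [Decidable p2] [Decidable q1] [Decidable q2]
    (h1 : p1 ∨ p2) (h2 : q1 ∨ q2) :
    (if p1 ∧ p2 then (1:ℕ) else 0) + (if q1 ∧ q2 then 1 else 0) ≤
      (if (p1 ∨ q1) ∧ (p2 ∧ q2) then 1 else 0) + (if (p1 ∧ q1) ∧ (p2 ∨ q2) then 1 else 0) := by
  by_cases p1 <;> by_cases p2 <;> by_cases q1 <;> by_cases q2 <;> simp [*] <;> tauto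

lemma ineq_auxM (p1 p2 q1 q2 : Prop) [Decidable p1] [Decidable p2] [Decidable q1] [Decidable q2]
    (h1 : ¬(p1 ∧ p2)) (h2 : ¬(q1 ∧ q2)) :
    (if (p1 ∨ q1) ∨ (p2 ∧ q2) then (1:ℕ) else 0) + (if (p1 ∧ q1) ∨ (p2 ∨ q2) then 1 else 0) ≤
      (if p1 ∨ p2 then 1 else 0) + (if q1 ∨ q2 then 1 else 0) := by
  by_cases p1 <;> by_cases p2 <;> by_cases q1 <;> by_cases q2 <;> simp [*] <;> tauto

lemma quad_inter_card (T X₁ X₂ Y₁ Y₂ : Finset α) (s : α)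
    (hT : ∀ t ∈ T, t = s ∨ (t ∈ X₁ ∪ X₂ ∧ t ∈ Y₁ ∪ Y₂))
    (hs : ¬(s ∈ Y₁ ∧ s ∈ Y₂)) :
    (T ∩ X₁ ∩ X₂).card + (T ∩ Y₁ ∩ Y₂).card ≤
      (T ∩ (X₁ ∪ Y₁) ∩ (X₂ ∩ Y₂)).card + (T ∩ (X₁ ∩ Y₁) ∩ (X₂ ∪ Y₂)).card + 1 := by
  rw [Finset.inter_assoc T X₁ X₂, Finset.inter_assoc T Y₁ Y₂,
    Finset.inter_assoc T (X₁ ∪ Y₁), Finset.inter_assoc T (X₁ ∩ Y₁),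
    card_inter_as_sum, card_inter_as_sum, card_inter_as_sum, card_inter_as_sum]
  rw [← Finset.sum_add_distrib, ← Finset.sum_add_distrib]
  have key : ∀ t ∈ T,
      ((if t ∈ X₁ ∩ X₂ then 1 else 0) + (if t ∈ Y₁ ∩ Y₂ then 1 else 0) : ℕ) ≤
      ((if t ∈ (X₁ ∪ Y₁) ∩ (X₂ ∩ Y₂) then 1 else 0) +
        (if t ∈ (X₁ ∩ Y₁) ∩ (X₂ ∪ Y₂) then 1 else 0)) + (if t = s then 1 else 0) := by
    intro t ht
    simp only [Finset.mem_inter, Finset.mem_union]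
    rcases hT t ht with h | ⟨h1, h2⟩
    · have he : (if t = s then (1:ℕ) else 0) = 1 := if_pos h
      have hY : ¬(t ∈ Y₁ ∧ t ∈ Y₂) := by rw [h]; exact hs
      have hb : (if t ∈ X₁ ∧ t ∈ X₂ then (1:ℕ) else 0) ≤ 1 := by split <;> omega
      rw [he, if_neg hY]
      omega
    · simp only [Finset.mem_union] at h1 h2
      have := ineq_auxP (t ∈ X₁) (t ∈ X₂) (t ∈ Y₁) (t ∈ Y₂) h1 h2
      omega
  calc (∑ t ∈ T, ((if t ∈ X₁ ∩ X₂ then 1 else 0) + (if t ∈ Y₁ ∩ Y₂ then 1 else 0)))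
      ≤ ∑ t ∈ T, (((if t ∈ (X₁ ∪ Y₁) ∩ (X₂ ∩ Y₂) then 1 else 0) +
          (if t ∈ (X₁ ∩ Y₁) ∩ (X₂ ∪ Y₂) then 1 else 0)) + (if t = s then 1 else 0)) :=
        Finset.sum_le_sum key
    _ ≤ _ := by
        rw [Finset.sum_add_distrib]
        have : (∑ t ∈ T, if t = s then 1 else 0) ≤ 1 := by
          rw [Finset.sum_ite_eq' T s (fun _ => 1)]
          split <;> omega
        omega

lemma quad_union_card (T X₁ X₂ Y₁ Y₂ : Finset α) (s : α)
    (hT : ∀ t ∈ T, t = s ∨ (¬(t ∈ X₁ ∧ t ∈ X₂) ∧ ¬(t ∈ Y₁ ∧ t ∈ Y₂)))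
    (hs : s ∈ X₁ ∨ s ∈ X₂) :
    (T ∩ ((X₁ ∪ Y₁) ∪ X₂ ∩ Y₂)).card + (T ∩ ((X₁ ∩ Y₁) ∪ (X₂ ∪ Y₂))).card ≤
      (T ∩ (X₁ ∪ X₂)).card + (T ∩ (Y₁ ∪ Y₂)).card + 1 := by
  rw [card_inter_as_sum, card_inter_as_sum, card_inter_as_sum, card_inter_as_sum]
  rw [← Finset.sum_add_distrib, ← Finset.sum_add_distrib]
  have key : ∀ t ∈ T,
      ((if t ∈ (X₁ ∪ Y₁) ∪ X₂ ∩ Y₂ then 1 else 0) +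
        (if t ∈ (X₁ ∩ Y₁) ∪ (X₂ ∪ Y₂) then 1 else 0) : ℕ) ≤
      ((if t ∈ X₁ ∪ X₂ then 1 else 0) + (if t ∈ Y₁ ∪ Y₂ then 1 else 0)) +
        (if t = s then 1 else 0) := by
    intro t ht
    simp only [Finset.mem_inter, Finset.mem_union]
    rcases hT t ht with h | ⟨h1, h2⟩
    · have he : (if t = s then (1:ℕ) else 0) = 1 := if_pos h
      have hX : t ∈ X₁ ∨ t ∈ X₂ := by rw [h]; exact hs
      have hb1 : (if (t ∈ X₁ ∨ t ∈ Y₁) ∨ t ∈ X₂ ∧ t ∈ Y₂ then (1:ℕ) else 0) ≤ 1 := by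
        split <;> omega
      have hb2 : (if t ∈ X₁ ∧ t ∈ Y₁ ∨ (t ∈ X₂ ∨ t ∈ Y₂) then (1:ℕ) else 0) ≤ 1 := by
        split <;> omega
      have hb3 : (if t ∈ X₁ ∨ t ∈ X₂ then (1:ℕ) else 0) = 1 := if_pos hX
      rw [he]
      omega
    · have := ineq_auxM (t ∈ X₁) (t ∈ X₂) (t ∈ Y₁) (t ∈ Y₂) h1 h2
      omega
  calc _ ≤ ∑ t ∈ T, (((if t ∈ X₁ ∪ X₂ then 1 else 0) + (if t ∈ Y₁ ∪ Y₂ then 1 else 0)) +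
          (if t = s then 1 else 0)) := Finset.sum_le_sum key
    _ ≤ _ := by
        rw [Finset.sum_add_distrib]
        have : (∑ t ∈ T, if t = s then 1 else 0) ≤ 1 := by
          rw [Finset.sum_ite_eq' T s (fun _ => 1)]
          split <;> omega
        omega

lemma sum_ite_mem_neg (C M : Finset α) :
    (∑ t ∈ C, if t ∈ M then (-1 : ℤ) else 0) = -((M ∩ C).card : ℤ) := by
  rw [Finset.sum_ite_mem, Finset.sum_const, Finset.inter_comm]
  simp

lemma sum_ite_mem_pos (C M : Finset α) :
    (∑ t ∈ C, if t ∈ M then (1 : ℤ) else 0) = ((M ∩ C).card : ℤ) := by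
  rw [Finset.sum_ite_mem, Finset.sum_const, Finset.inter_comm]
  simp

end counting

/-- The σ-inequality condition, in terms of entrywise bounds lo ≤ A ≤ hi. -/
def StarCond (n : ℕ) (lo hi : ℕ × ℕ → ℤ) : Prop :=
  ∀ X₁ ⊆ Smn n n, ∀ X₂ ⊆ Smn n n,
    Smn n n \ (X₁ ∪ X₂) ⊆ (Smn n n).filter (fun t => hi t ≤ 0) →
    X₁ ∩ X₂ ⊆ (Smn n n).filter (fun t => 0 ≤ lo t) →
    n + ((Smn n n).filter (fun t => hi t = -1) ∩ (Smn n n \ (X₁ ∪ X₂))).card +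
      ((Smn n n).filter (fun t => lo t = 1) ∩ X₁ ∩ X₂).card ≤ sigma1 X₁ + sigma2 X₂

section forward

variable {n : ℕ} {A lo hi : ℕ × ℕ → ℤ}

lemma fsum_Smn_eq (hA : ∀ i ∈ Finset.Icc 1 n, fsum A (hPrefix i n) = 1) :
    fsum A (Smn n n) = n := by
  rw [Smn, fsum, Finset.sum_product]
  have : ∀ i ∈ Finset.Icc 1 n, (∑ j ∈ Finset.Icc 1 n, A (i, j)) = 1 := by
    intro i hi
    rw [← fsum_hPrefix]
    exact hA i hi
  rw [Finset.sum_congr rfl this]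
  simp [Nat.card_Icc]

lemma forward_star (hA : IsASM n A) (hc : ∀ t ∈ Smn n n, lo t ≤ A t ∧ A t ≤ hi t) :
    StarCond n lo hi := by
  intro X₁ hX₁ X₂ hX₂ hD hU
  have hbr : ∀ i ∈ Finset.Icc 1 n, ∀ j ∈ Finset.Icc 1 n,
      0 ≤ fsum A (hPrefix i j) ∧ fsum A (hPrefix i j) ≤ 1 := by
    intro i hi j hj
    rcases (hA.1 i hi j hj).1 with h | h <;> omega
  have hbc : ∀ i ∈ Finset.Icc 1 n, ∀ j ∈ Finset.Icc 1 n,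
      0 ≤ fsum A (vPrefix i j) ∧ fsum A (vPrefix i j) ≤ 1 := by
    intro i hi j hj
    rcases (hA.1 i hi j hj).2 with h | h <;> omega
  have h1 : fsum A X₁ ≤ (sigma1 X₁ : ℤ) := fsum_le_sigma1 A hX₁ hbr
  have h2 : fsum A X₂ ≤ (sigma2 X₂ : ℤ) := fsum_le_sigma2 A hX₂ hbc
  have hui : fsum A (X₁ ∪ X₂) + fsum A (X₁ ∩ X₂) = fsum A X₁ + fsum A X₂ :=
    Finset.sum_union_inter
  have hsp : fsum A (Smn n n \ (X₁ ∪ X₂)) + fsum A (X₁ ∪ X₂) = fsum A (Smn n n) :=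
    Finset.sum_sdiff (Finset.union_subset hX₁ hX₂)
  have hS : fsum A (Smn n n) = n := fsum_Smn_eq hA.2.1
  -- bound on the complement
  set C := Smn n n \ (X₁ ∪ X₂) with hC
  set M1 := (Smn n n).filter (fun t => hi t = -1) with hM1
  set P1 := (Smn n n).filter (fun t => lo t = 1) with hP1
  have hcb : fsum A C ≤ -((M1 ∩ C).card : ℤ) := by
    rw [← sum_ite_mem_neg C M1]
    refine Finset.sum_le_sum fun t ht => ?_
    have htS : t ∈ Smn n n := (Finset.sdiff_subset) ht
    have hle : hi t ≤ 0 := (Finset.mem_filter.1 (hD ht)).2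
    have hAt := hc t htS
    split_ifs with hm
    · have : hi t = -1 := (Finset.mem_filter.1 hm).2
      omega
    · omega
  have hib : ((P1 ∩ (X₁ ∩ X₂)).card : ℤ) ≤ fsum A (X₁ ∩ X₂) := by
    rw [← sum_ite_mem_pos (X₁ ∩ X₂) P1]
    refine Finset.sum_le_sum fun t ht => ?_
    have hge : 0 ≤ lo t := (Finset.mem_filter.1 (hU ht)).2
    have htS : t ∈ Smn n n := Finset.mem_filter.1 (hU ht) |>.1
    have hAt := hc t htS
    split_ifs with hm
    · have : lo t = 1 := (Finset.mem_filter.1 hm).2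
      omega
    · omega
  have hfin : (n : ℤ) + ((M1 ∩ C).card : ℤ) + ((P1 ∩ (X₁ ∩ X₂)).card : ℤ) ≤
      (sigma1 X₁ : ℤ) + (sigma2 X₂ : ℤ) := by omega
  have heq : P1 ∩ X₁ ∩ X₂ = P1 ∩ (X₁ ∩ X₂) := Finset.inter_assoc _ _ _
  rw [heq]
  exact_mod_cast hfin

end forward

section refine

lemma refine_step {n : ℕ} {lo hi : ℕ × ℕ → ℤ}
    (hlh : ∀ t ∈ Smn n n, lo t ≤ hi t)
    (hlo1 : ∀ t ∈ Smn n n, -1 ≤ lo t) (hhi1 : ∀ t ∈ Smn n n, hi t ≤ 1)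
    {s : ℕ × ℕ} (hsS : s ∈ Smn n n) (hs : lo s < hi s)
    (hstar : StarCond n lo hi) :
    StarCond n (Function.update lo s (lo s + 1)) hi ∨
      StarCond n lo (Function.update hi s (hi s - 1)) := by
  by_contra hcon
  push_neg at hcon
  obtain ⟨hup, hdown⟩ := hcon
  rw [StarCond] at hup hdown
  push_neg at hup hdown
  obtain ⟨X₁, hX₁, X₂, hX₂, hXD, hXU, hXv⟩ := hup
  obtain ⟨Y₁, hY₁, Y₂, hY₂, hYD, hYU, hYv⟩ := hdown
  have hsl : lo s ≤ 0 := by have := hhi1 s hsS; omega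
  have hsh : 0 ≤ hi s := by have := hlo1 s hsS; omega
  set S := Smn n n with hSdef
  set lo' := Function.update lo s (lo s + 1) with hlo'
  set hi' := Function.update hi s (hi s - 1) with hhi'
  have hlo's : lo' s = lo s + 1 := Function.update_self _ _ _
  have hhi's : hi' s = hi s - 1 := Function.update_self _ _ _
  set M1 := S.filter (fun t => hi t = -1) with hM1
  set P1 := S.filter (fun t => lo t = 1) with hP1
  have hsM : s ∉ M1 := by
    rw [hM1, Finset.mem_filter]; push_neg; intro _; omega
  have hsP : s ∉ P1 := by
    rw [hP1, Finset.mem_filter]; push_neg; intro _; omega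
  -- forcing s ∈ X₁ ∩ X₂
  have hsX : s ∈ X₁ ∧ s ∈ X₂ := by
    by_contra hc
    have hXU' : X₁ ∩ X₂ ⊆ S.filter (fun t => 0 ≤ lo t) := by
      intro t ht
      have h2 := Finset.mem_filter.1 (hXU ht)
      refine Finset.mem_filter.2 ⟨h2.1, ?_⟩
      have hts : t ≠ s := by
        rintro rfl
        exact hc ⟨(Finset.mem_inter.1 ht).1, (Finset.mem_inter.1 ht).2⟩
      have := h2.2
      rwa [hlo', Function.update_of_ne hts] at this
    have hcontr := hstar X₁ hX₁ X₂ hX₂ hXD hXU'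
    simp only [← hSdef, ← hM1, ← hP1] at hcontr
    have hcards : S.filter (fun t => lo' t = 1) ∩ X₁ ∩ X₂ = P1 ∩ X₁ ∩ X₂ := by
      ext t
      simp only [Finset.mem_inter, Finset.mem_filter, hP1]
      constructor
      · rintro ⟨⟨⟨htS, hl⟩, ht1⟩, ht2⟩
        have hts : t ≠ s := by rintro rfl; exact hc ⟨ht1, ht2⟩
        rw [hlo', Function.update_of_ne hts] at hl
        exact ⟨⟨⟨htS, hl⟩, ht1⟩, ht2⟩
      · rintro ⟨⟨⟨htS, hl⟩, ht1⟩, ht2⟩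
        have hts : t ≠ s := by rintro rfl; exact hc ⟨ht1, ht2⟩
        rw [hlo', Function.update_of_ne hts]
        exact ⟨⟨⟨htS, hl⟩, ht1⟩, ht2⟩
    rw [hcards] at hXv
    omega
  -- forcing s ∉ Y₁ ∪ Y₂
  have hsY : s ∉ Y₁ ∪ Y₂ := by
    by_contra hc
    have hYD' : S \ (Y₁ ∪ Y₂) ⊆ S.filter (fun t => hi t ≤ 0) := by
      intro t ht
      have h2 := Finset.mem_filter.1 (hYD ht)
      have hts : t ≠ s := by rintro rfl; exact (Finset.mem_sdiff.1 ht).2 hc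
      refine Finset.mem_filter.2 ⟨h2.1, ?_⟩
      have := h2.2
      rwa [hhi', Function.update_of_ne hts] at this
    have hcontr := hstar Y₁ hY₁ Y₂ hY₂ hYD' hYU
    simp only [← hSdef, ← hM1, ← hP1] at hcontr
    have hcards : S.filter (fun t => hi' t = -1) ∩ (S \ (Y₁ ∪ Y₂)) =
        M1 ∩ (S \ (Y₁ ∪ Y₂)) := by
      ext t
      simp only [Finset.mem_inter, Finset.mem_filter, hM1]
      constructor
      · rintro ⟨⟨htS, hl⟩, htc⟩
        have hts : t ≠ s := by rintro rfl; exact (Finset.mem_sdiff.1 htc).2 hc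
        rw [hhi', Function.update_of_ne hts] at hl
        exact ⟨⟨htS, hl⟩, htc⟩
      · rintro ⟨⟨htS, hl⟩, htc⟩
        have hts : t ≠ s := by rintro rfl; exact (Finset.mem_sdiff.1 htc).2 hc
        rw [hhi', Function.update_of_ne hts]
        exact ⟨⟨htS, hl⟩, htc⟩
    rw [hcards] at hYv
    omega
  obtain ⟨hsX1, hsX2⟩ := hsX
  have hsY1 : s ∉ Y₁ := fun h => hsY (Finset.mem_union_left _ h)
  have hsY2 : s ∉ Y₂ := fun h => hsY (Finset.mem_union_right _ h)
  set M1' := insert s M1 with hM1'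
  set P1' := insert s P1 with hP1'
  set cX := S \ (X₁ ∪ X₂) with hcX
  set cY := S \ (Y₁ ∪ Y₂) with hcY
  have hscX : s ∉ cX := fun h => (Finset.mem_sdiff.1 h).2 (Finset.mem_union_left _ hsX1)
  have hscY : s ∈ cY := Finset.mem_sdiff.2 ⟨hsS, hsY⟩
  -- (UB-X)
  have e1 : M1' ∩ cX = M1 ∩ cX := by
    rw [hM1']
    ext t
    simp only [Finset.mem_inter, Finset.mem_insert]
    constructor
    · rintro ⟨h1 | h1, h2⟩
      · exact absurd (h1 ▸ h2) hscX
      · exact ⟨h1, h2⟩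
    · rintro ⟨h1, h2⟩; exact ⟨Or.inr h1, h2⟩
  have e2 : (P1' ∩ X₁ ∩ X₂).card = (P1 ∩ X₁ ∩ X₂).card + 1 := by
    have he : P1' ∩ X₁ ∩ X₂ = insert s (P1 ∩ X₁ ∩ X₂) := by
      rw [hP1']
      ext t
      simp only [Finset.mem_inter, Finset.mem_insert]
      constructor
      · rintro ⟨⟨h1 | h1, h2⟩, h3⟩
        · exact Or.inl h1
        · exact Or.inr ⟨⟨h1, h2⟩, h3⟩
      · rintro (rfl | ⟨⟨h1, h2⟩, h3⟩)
        · exact ⟨⟨Or.inl rfl, hsX1⟩, hsX2⟩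
        · exact ⟨⟨Or.inr h1, h2⟩, h3⟩
    rw [he, Finset.card_insert_of_notMem]
    intro h
    exact hsP (Finset.mem_inter.1 (Finset.mem_inter.1 h).1).1
  have e3 : (S.filter (fun t => lo' t = 1) ∩ X₁ ∩ X₂).card ≤
      (P1 ∩ X₁ ∩ X₂).card + (if lo s = 0 then 1 else 0) := by
    by_cases hls : lo s = 0
    · rw [if_pos hls]
      have hsub : S.filter (fun t => lo' t = 1) ∩ X₁ ∩ X₂ ⊆ insert s (P1 ∩ X₁ ∩ X₂) := by
        intro t ht
        simp only [Finset.mem_inter, Finset.mem_filter] at ht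
        by_cases hts : t = s
        · exact hts ▸ Finset.mem_insert_self _ _
        · refine Finset.mem_insert_of_mem ?_
          have hl := ht.1.1.2
          rw [hlo', Function.update_of_ne hts] at hl
          simp only [Finset.mem_inter, Finset.mem_filter, hP1]
          exact ⟨⟨⟨ht.1.1.1, hl⟩, ht.1.2⟩, ht.2⟩
      calc _ ≤ (insert s (P1 ∩ X₁ ∩ X₂)).card := Finset.card_le_card hsub
        _ ≤ _ := Finset.card_insert_le _ _
    · rw [if_neg hls]
      refine Finset.card_le_card ?_
      intro t ht
      simp only [Finset.mem_inter, Finset.mem_filter] at ht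
      have hts : t ≠ s := by
        rintro rfl
        have := ht.1.1.2
        rw [hlo's] at this
        omega
      have hl := ht.1.1.2
      rw [hlo', Function.update_of_ne hts] at hl
      simp only [Finset.mem_inter, Finset.mem_filter, hP1]
      exact ⟨⟨⟨ht.1.1.1, hl⟩, ht.1.2⟩, ht.2⟩
  have UBX : sigma1 X₁ + sigma2 X₂ + 2 ≤
      n + (M1' ∩ cX).card + (P1' ∩ X₁ ∩ X₂).card + (if lo s = 0 then 1 else 0) := by
    rw [e1, e2]
    omega
  -- (UB-Y)
  have e4 : P1' ∩ Y₁ ∩ Y₂ = P1 ∩ Y₁ ∩ Y₂ := by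
    rw [hP1']
    ext t
    simp only [Finset.mem_inter, Finset.mem_insert]
    constructor
    · rintro ⟨⟨h1 | h1, h2⟩, h3⟩
      · exact absurd (h1 ▸ h2) hsY1
      · exact ⟨⟨h1, h2⟩, h3⟩
    · rintro ⟨⟨h1, h2⟩, h3⟩; exact ⟨⟨Or.inr h1, h2⟩, h3⟩
  have e5 : (M1' ∩ cY).card = (M1 ∩ cY).card + 1 := by
    have he : M1' ∩ cY = insert s (M1 ∩ cY) := by
      rw [hM1']
      ext t
      simp only [Finset.mem_inter, Finset.mem_insert]
      constructor
      · rintro ⟨h1 | h1, h2⟩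
        · exact Or.inl h1
        · exact Or.inr ⟨h1, h2⟩
      · rintro (rfl | ⟨h1, h2⟩)
        · exact ⟨Or.inl rfl, hscY⟩
        · exact ⟨Or.inr h1, h2⟩
    rw [he, Finset.card_insert_of_notMem]
    intro h
    exact hsM (Finset.mem_inter.1 h).1
  have e6 : (S.filter (fun t => hi' t = -1) ∩ cY).card ≤
      (M1 ∩ cY).card + (if hi s = 0 then 1 else 0) := by
    by_cases hhs : hi s = 0
    · rw [if_pos hhs]
      have hsub : S.filter (fun t => hi' t = -1) ∩ cY ⊆ insert s (M1 ∩ cY) := by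
        intro t ht
        simp only [Finset.mem_inter, Finset.mem_filter] at ht
        by_cases hts : t = s
        · exact hts ▸ Finset.mem_insert_self _ _
        · refine Finset.mem_insert_of_mem ?_
          have hl := ht.1.2
          rw [hhi', Function.update_of_ne hts] at hl
          simp only [Finset.mem_inter, Finset.mem_filter, hM1]
          exact ⟨⟨ht.1.1, hl⟩, ht.2⟩
      calc _ ≤ (insert s (M1 ∩ cY)).card := Finset.card_le_card hsub
        _ ≤ _ := Finset.card_insert_le _ _
    · rw [if_neg hhs]
      refine Finset.card_le_card ?_
      intro t ht
      simp only [Finset.mem_inter, Finset.mem_filter] at ht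
      have hts : t ≠ s := by
        rintro rfl
        have := ht.1.2
        rw [hhi's] at this
        omega
      have hl := ht.1.2
      rw [hhi', Function.update_of_ne hts] at hl
      simp only [Finset.mem_inter, Finset.mem_filter, hM1]
      exact ⟨⟨ht.1.1, hl⟩, ht.2⟩
  have UBY : sigma1 Y₁ + sigma2 Y₂ + 2 ≤
      n + (M1' ∩ cY).card + (P1' ∩ Y₁ ∩ Y₂).card + (if hi s = 0 then 1 else 0) := by
    rw [e4, e5]
    omega
  have ITE : (if lo s = 0 then 1 else 0) + (if hi s = 0 then 1 else 0) ≤ 1 := by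
    split_ifs <;> omega
  -- the uncrossed pairs
  set Z₁ := X₁ ∪ Y₁ with hZ₁
  set Z₂ := X₂ ∩ Y₂ with hZ₂
  set W₁ := X₁ ∩ Y₁ with hW₁
  set W₂ := X₂ ∪ Y₂ with hW₂
  set cZ := S \ (Z₁ ∪ Z₂) with hcZ
  set cW := S \ (W₁ ∪ W₂) with hcW
  -- star at Z
  have hZD : cZ ⊆ S.filter (fun t => hi t ≤ 0) := by
    intro t ht
    obtain ⟨htS, htn⟩ := Finset.mem_sdiff.1 ht
    simp only [hZ₁, hZ₂, Finset.mem_union, Finset.mem_inter] at htn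
    push_neg at htn
    by_cases ht2 : t ∈ X₂
    · have ht2' : t ∉ Y₂ := htn.2 ht2
      have htc : t ∈ cY := Finset.mem_sdiff.2 ⟨htS, by
        simp only [Finset.mem_union]; push_neg; exact ⟨htn.1.2, ht2'⟩⟩
      have h2 := Finset.mem_filter.1 (hYD htc)
      have hts : t ≠ s := by rintro rfl; exact htn.1.1 hsX1
      refine Finset.mem_filter.2 ⟨htS, ?_⟩
      have := h2.2
      rwa [hhi', Function.update_of_ne hts] at this
    · have htc : t ∈ cX := Finset.mem_sdiff.2 ⟨htS, by
        simp only [Finset.mem_union]; push_neg; exact ⟨htn.1.1, ht2⟩⟩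
      exact hXD htc
  have hZU : Z₁ ∩ Z₂ ⊆ S.filter (fun t => 0 ≤ lo t) := by
    intro t ht
    simp only [hZ₁, hZ₂, Finset.mem_inter, Finset.mem_union] at ht
    have h1 := ht.1
    have h2 := ht.2.1
    have h3 := ht.2.2
    rcases h1 with h1 | h1
    · have hx := Finset.mem_filter.1 (hXU (Finset.mem_inter.2 ⟨h1, h2⟩))
      have hts : t ≠ s := by rintro rfl; exact hsY2 h3
      refine Finset.mem_filter.2 ⟨hx.1, ?_⟩
      have := hx.2
      rwa [hlo', Function.update_of_ne hts] at this
    · exact hYU (Finset.mem_inter.2 ⟨h1, h3⟩)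
  have LBZ := hstar Z₁ (Finset.union_subset hX₁ hY₁) Z₂
    (fun t ht => hX₂ (Finset.mem_inter.1 ht).1) hZD hZU
  simp only [← hSdef, ← hM1, ← hP1, ← hcZ] at LBZ
  have hscZ : s ∉ cZ := fun h =>
    (Finset.mem_sdiff.1 h).2 (Finset.mem_union_left _ (Finset.mem_union_left _ hsX1))
  have hsZ2 : s ∉ Z₂ := fun h => hsY2 (Finset.mem_inter.1 h).2
  have e7 : M1' ∩ cZ = M1 ∩ cZ := by
    rw [hM1']
    ext t
    simp only [Finset.mem_inter, Finset.mem_insert]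
    constructor
    · rintro ⟨h1 | h1, h2⟩
      · exact absurd (h1 ▸ h2) hscZ
      · exact ⟨h1, h2⟩
    · rintro ⟨h1, h2⟩; exact ⟨Or.inr h1, h2⟩
  have e8 : P1' ∩ Z₁ ∩ Z₂ = P1 ∩ Z₁ ∩ Z₂ := by
    rw [hP1']
    ext t
    simp only [Finset.mem_inter, Finset.mem_insert]
    constructor
    · rintro ⟨⟨h1 | h1, h2⟩, h3⟩
      · exact absurd (h1 ▸ h3) hsZ2
      · exact ⟨⟨h1, h2⟩, h3⟩
    · rintro ⟨⟨h1, h2⟩, h3⟩; exact ⟨⟨Or.inr h1, h2⟩, h3⟩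
  -- star at W
  have hWD : cW ⊆ S.filter (fun t => hi t ≤ 0) := by
    intro t ht
    obtain ⟨htS, htn⟩ := Finset.mem_sdiff.1 ht
    simp only [hW₁, hW₂, Finset.mem_union, Finset.mem_inter] at htn
    push_neg at htn
    by_cases ht1 : t ∈ X₁
    · have ht1' : t ∉ Y₁ := htn.1 ht1
      have htc : t ∈ cY := Finset.mem_sdiff.2 ⟨htS, by
        simp only [Finset.mem_union]; push_neg; exact ⟨ht1', htn.2.2⟩⟩
      have h2 := Finset.mem_filter.1 (hYD htc)
      have hts : t ≠ s := by rintro rfl; exact htn.2.1 hsX2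
      refine Finset.mem_filter.2 ⟨htS, ?_⟩
      have := h2.2
      rwa [hhi', Function.update_of_ne hts] at this
    · have htc : t ∈ cX := Finset.mem_sdiff.2 ⟨htS, by
        simp only [Finset.mem_union]; push_neg; exact ⟨ht1, htn.2.1⟩⟩
      exact hXD htc
  have hWU : W₁ ∩ W₂ ⊆ S.filter (fun t => 0 ≤ lo t) := by
    intro t ht
    simp only [hW₁, hW₂, Finset.mem_inter, Finset.mem_union] at ht
    obtain ⟨⟨h1, h2⟩, h3⟩ := ht
    rcases h3 with h3 | h3
    · have hx := Finset.mem_filter.1 (hXU (Finset.mem_inter.2 ⟨h1, h3⟩))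
      have hts : t ≠ s := by rintro rfl; exact hsY1 h2
      refine Finset.mem_filter.2 ⟨hx.1, ?_⟩
      have := hx.2
      rwa [hlo', Function.update_of_ne hts] at this
    · exact hYU (Finset.mem_inter.2 ⟨h2, h3⟩)
  have LBW := hstar W₁ (fun t ht => hX₁ (Finset.mem_inter.1 ht).1) W₂
    (Finset.union_subset hX₂ hY₂) hWD hWU
  simp only [← hSdef, ← hM1, ← hP1, ← hcW] at LBW
  have hscW : s ∉ cW := fun h =>
    (Finset.mem_sdiff.1 h).2 (Finset.mem_union_right _ (Finset.mem_union_left _ hsX2))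
  have hsW1 : s ∉ W₁ := fun h => hsY1 (Finset.mem_inter.1 h).2
  have e9 : M1' ∩ cW = M1 ∩ cW := by
    rw [hM1']
    ext t
    simp only [Finset.mem_inter, Finset.mem_insert]
    constructor
    · rintro ⟨h1 | h1, h2⟩
      · exact absurd (h1 ▸ h2) hscW
      · exact ⟨h1, h2⟩
    · rintro ⟨h1, h2⟩; exact ⟨Or.inr h1, h2⟩
  have e10 : P1' ∩ W₁ ∩ W₂ = P1 ∩ W₁ ∩ W₂ := by
    rw [hP1']
    ext t
    simp only [Finset.mem_inter, Finset.mem_insert]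
    constructor
    · rintro ⟨⟨h1 | h1, h2⟩, h3⟩
      · exact absurd (h1 ▸ h2) hsW1
      · exact ⟨⟨h1, h2⟩, h3⟩
    · rintro ⟨⟨h1, h2⟩, h3⟩; exact ⟨⟨Or.inr h1, h2⟩, h3⟩
  -- submodularity
  have SUB1 : sigma1 Z₁ + sigma1 W₁ ≤ sigma1 X₁ + sigma1 Y₁ := sigma1_submod X₁ Y₁
  have SUB2 : sigma2 W₂ + sigma2 Z₂ ≤ sigma2 X₂ + sigma2 Y₂ := sigma2_submod X₂ Y₂
  -- counting inequality for P1'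
  have hP1'S : P1' ⊆ S := by
    rw [hP1']
    exact Finset.insert_subset hsS (Finset.filter_subset _ _)
  have hM1'S : M1' ⊆ S := by
    rw [hM1']
    exact Finset.insert_subset hsS (Finset.filter_subset _ _)
  have CIP : (P1' ∩ X₁ ∩ X₂).card + (P1' ∩ Y₁ ∩ Y₂).card ≤
      (P1' ∩ Z₁ ∩ Z₂).card + (P1' ∩ W₁ ∩ W₂).card + 1 := by
    refine quad_inter_card P1' X₁ X₂ Y₁ Y₂ s ?_ ?_
    · intro t ht
      rcases Finset.mem_insert.1 ht with h | h
      · exact Or.inl h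
      · right
        have htP := Finset.mem_filter.1 h
        have hts : t ≠ s := by rintro rfl; exact hsP h
        constructor
        · by_contra hc
          have htc : t ∈ cX := Finset.mem_sdiff.2 ⟨htP.1, hc⟩
          have := (Finset.mem_filter.1 (hXD htc)).2
          have := hlh t htP.1
          omega
        · by_contra hc
          have htc : t ∈ cY := Finset.mem_sdiff.2 ⟨htP.1, hc⟩
          have h2 := (Finset.mem_filter.1 (hYD htc)).2
          rw [hhi', Function.update_of_ne hts] at h2
          have := hlh t htP.1
          omega
    · rintro ⟨h1, h2⟩; exact hsY1 h1
  -- counting inequality for M1'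
  have hTM : ∀ t ∈ M1', t = s ∨ (¬(t ∈ X₁ ∧ t ∈ X₂) ∧ ¬(t ∈ Y₁ ∧ t ∈ Y₂)) := by
    intro t ht
    rcases Finset.mem_insert.1 ht with h | h
    · exact Or.inl h
    · right
      have htM := Finset.mem_filter.1 h
      have hts : t ≠ s := by rintro rfl; exact hsM h
      constructor
      · rintro ⟨ha, hb⟩
        have h2 := (Finset.mem_filter.1 (hXU (Finset.mem_inter.2 ⟨ha, hb⟩))).2
        rw [hlo', Function.update_of_ne hts] at h2
        have := hlh t htM.1
        omega
      · rintro ⟨ha, hb⟩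
        have h2 := (Finset.mem_filter.1 (hYU (Finset.mem_inter.2 ⟨ha, hb⟩))).2
        have := hlh t htM.1
        omega
  have CIM : (M1' ∩ cX).card + (M1' ∩ cY).card ≤
      (M1' ∩ cZ).card + (M1' ∩ cW).card + 1 := by
    have q := quad_union_card M1' X₁ X₂ Y₁ Y₂ s hTM (Or.inl hsX1)
    have c1 := card_inter_sdiff_add (B := X₁ ∪ X₂) hM1'S
    have c2 := card_inter_sdiff_add (B := Y₁ ∪ Y₂) hM1'S
    have c3 := card_inter_sdiff_add (B := Z₁ ∪ Z₂) hM1'S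
    have c4 := card_inter_sdiff_add (B := W₁ ∪ W₂) hM1'S
    rw [hcX, hcY, hcZ, hcW, hZ₁, hZ₂, hW₁, hW₂]
    rw [hZ₁, hZ₂] at c3
    rw [hW₁, hW₂] at c4
    omega
  rw [← e7, ← e8] at LBZ
  rw [← e9, ← e10] at LBW
  omega

end refine

section base

variable {n : ℕ} {A : ℕ × ℕ → ℤ}

lemma ones_count {I : Finset (ℕ × ℕ)} (hA : ∀ t ∈ I, A t = 0 ∨ A t = 1) :
    fsum A I ≤ ((I.filter (fun t => A t = 1)).card : ℤ) := by
  rw [fsum]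
  calc (∑ t ∈ I, A t) ≤ ∑ t ∈ I, (if A t = 1 then (1 : ℤ) else 0) := by
        refine Finset.sum_le_sum fun t ht => ?_
        rcases hA t ht with h | h <;> simp [h]
    _ = ((I.filter (fun t => A t = 1)).card : ℤ) := by
        rw [← Finset.sum_filter, Finset.sum_const]
        simp
lemma negs_count {I : Finset (ℕ × ℕ)} (hA : ∀ t ∈ I, A t = -1 ∨ A t = 0) :
    -(fsum A I) ≤ ((I.filter (fun t => A t = -1)).card : ℤ) := by
  rw [fsum]
  have : (∑ t ∈ I, (if A t = -1 then (-1 : ℤ) else 0)) ≤ ∑ t ∈ I, A t := by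
    refine Finset.sum_le_sum fun t ht => ?_
    rcases hA t ht with h | h <;> simp [h]
  have h2 : (∑ t ∈ I, (if A t = -1 then (-1 : ℤ) else 0)) =
      -((I.filter (fun t => A t = -1)).card : ℤ) := by
    rw [← Finset.sum_filter, Finset.sum_const]
    simp
  omega

lemma rowIoc_subset {i a b : ℕ} (hi : i ∈ Finset.Icc 1 n) (hb : b ≤ n) :
    ({i} ×ˢ Finset.Ioc a b) ⊆ Smn n n := by
  intro t ht
  rw [Finset.mem_product, Finset.mem_singleton, Finset.mem_Ioc] at ht
  rw [Finset.mem_Icc] at hi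
  exact mem_Smn.2 ⟨⟨by omega, by omega⟩, by omega⟩

lemma sdiff_union_empty (C : Finset (ℕ × ℕ)) (hC : C ⊆ Smn n n) :
    Smn n n \ ((Smn n n \ C) ∪ ∅) = C := by
  ext t
  simp only [Finset.union_empty, Finset.mem_sdiff]
  constructor
  · rintro ⟨h1, h2⟩
    by_contra hc
    exact h2 ⟨h1, hc⟩
  · intro h
    exact ⟨hC h, fun hh => hh.2 h⟩

/-- Row upper bound: all horizontal prefix sums are ≤ 1. -/
lemma row_ub (hn : 1 ≤ n)
    (htri : ∀ t ∈ Smn n n, A t = -1 ∨ A t = 0 ∨ A t = 1)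
    (hstar : StarCond n A A) :
    ∀ i ∈ Finset.Icc 1 n, ∀ j ∈ Finset.Icc 1 n, fsum A (hPrefix i j) ≤ 1 := by
  intro i hi
  by_contra hc
  push_neg at hc
  obtain ⟨j, hj, hjv⟩ := hc
  set B := (Finset.Icc 1 n).filter (fun l => 2 ≤ fsum A (hPrefix i l)) with hB
  have hBne : B.Nonempty := ⟨j, Finset.mem_filter.2 ⟨hj, by omega⟩⟩
  set j₀ := B.min' hBne with hj₀
  have hj₀B : j₀ ∈ B := Finset.min'_mem _ _
  have hj₀Icc : j₀ ∈ Finset.Icc 1 n := (Finset.mem_filter.1 hj₀B).1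
  have hgj₀ : 2 ≤ fsum A (hPrefix i j₀) := (Finset.mem_filter.1 hj₀B).2
  have hj₀1 : 1 ≤ j₀ := (Finset.mem_Icc.1 hj₀Icc).1
  have hj₀n : j₀ ≤ n := (Finset.mem_Icc.1 hj₀Icc).2
  have hlt : ∀ l, l < j₀ → fsum A (hPrefix i l) ≤ 1 := by
    intro l hl
    rcases Nat.eq_zero_or_pos l with rfl | hl1
    · rw [fsum_hPrefix_zero]; omega
    · by_contra hcl
      have : l ∈ B := Finset.mem_filter.2 ⟨Finset.mem_Icc.2 ⟨hl1, by omega⟩, by omega⟩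
      have := Finset.min'_le _ _ this
      omega
  have hmemi : ∀ l, 1 ≤ l → l ≤ n → (i, l) ∈ Smn n n := by
    intro l h1 h2
    rw [Finset.mem_Icc] at hi
    exact mem_Smn.2 ⟨⟨hi.1, hi.2⟩, ⟨h1, h2⟩⟩
  have hstep : ∀ l, 1 ≤ l → fsum A (hPrefix i l) = fsum A (hPrefix i (l - 1)) + A (i, l) :=
    fun l hl => fsum_hPrefix_pred A i l hl
  -- A (i, j₀) = 1
  have hAj₀ : A (i, j₀) = 1 := by
    have h1 := hstep j₀ hj₀1
    have h2 := hlt (j₀ - 1) (by omega)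
    rcases htri (i, j₀) (hmemi j₀ hj₀1 hj₀n) with h | h | h <;> omega
  have hgj₀' : fsum A (hPrefix i j₀) = 2 ∧ fsum A (hPrefix i (j₀ - 1)) = 1 := by
    have h1 := hstep j₀ hj₀1
    have h2 := hlt (j₀ - 1) (by omega)
    omega
  -- maximal a < j₀ with prefix ≤ 0
  set Aset := (Finset.range j₀).filter (fun l => fsum A (hPrefix i l) ≤ 0) with hAset
  have hAne : Aset.Nonempty :=
    ⟨0, Finset.mem_filter.2 ⟨Finset.mem_range.2 (by omega), by rw [fsum_hPrefix_zero]⟩⟩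
  set a := Aset.max' hAne with ha
  have haA : a ∈ Aset := Finset.max'_mem _ _
  have haj₀ : a < j₀ := Finset.mem_range.1 (Finset.mem_filter.1 haA).1
  have hga : fsum A (hPrefix i a) ≤ 0 := (Finset.mem_filter.1 haA).2
  have hbig : ∀ l, a < l → l < j₀ → 1 ≤ fsum A (hPrefix i l) := by
    intro l h1 h2
    by_contra hcl
    have : l ∈ Aset := Finset.mem_filter.2 ⟨Finset.mem_range.2 h2, by omega⟩
    have := Finset.le_max' _ _ this
    omega
  have haj₀2 : a + 1 < j₀ := by
    rcases Nat.lt_or_ge (a + 1) j₀ with h | h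
    · exact h
    · exfalso
      have : a = j₀ - 1 := by omega
      rw [this] at hga
      omega
  have hga0 : fsum A (hPrefix i a) = 0 := by
    have h1 := hstep (a + 1) (by omega)
    have h2 := hbig (a + 1) (by omega) haj₀2
    have h3 : (a + 1) - 1 = a := by omega
    rw [h3] at h1
    rcases htri (i, a + 1) (hmemi (a + 1) (by omega) (by omega)) with h | h | h <;> omega
  -- the interval I
  set I := ({i} ×ˢ Finset.Ioc a j₀ : Finset (ℕ × ℕ)) with hI
  have hIS : I ⊆ Smn n n := rowIoc_subset hi hj₀n
  have hno : ∀ t ∈ I, A t = 0 ∨ A t = 1 := by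
    intro t ht
    rw [hI, Finset.mem_product, Finset.mem_singleton, Finset.mem_Ioc] at ht
    obtain ⟨ht1, ht2⟩ := ht
    have htS : t ∈ Smn n n := hIS (by
      rw [hI, Finset.mem_product, Finset.mem_singleton, Finset.mem_Ioc]; exact ⟨ht1, ht2⟩)
    rcases htri t htS with h | h | h
    · exfalso
      rcases Nat.eq_or_lt_of_le ht2.2 with he | hlt2
      · -- t.2 = j₀ : A t = 1
        have : t = (i, j₀) := Prod.ext ht1 he
        rw [this] at h
        omega
      · have hb1 := hbig t.2 ht2.1 hlt2
        have hb2 := hlt (t.2 - 1) (by omega)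
        have hst := hstep t.2 (by omega)
        have : t = (i, t.2) := Prod.ext ht1 rfl
        rw [this] at h
        omega
    · exact Or.inl h
    · exact Or.inr h
  have hsumI : fsum A I = 2 := by
    have := fsum_hPrefix_split A i a j₀ (by omega)
    rw [← hI] at this
    omega
  have hcnt : 2 ≤ ((I.filter (fun t => A t = 1)).card : ℤ) := by
    have := ones_count hno
    omega
  have hcnt' : 2 ≤ (I.filter (fun t => A t = 1)).card := by exact_mod_cast hcnt
  -- apply the star condition with X₁ = I, X₂ = S
  have hDemp : Smn n n \ (I ∪ Smn n n) ⊆ (Smn n n).filter (fun t => A t ≤ 0) := by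
    intro t ht
    rw [Finset.mem_sdiff] at ht
    exact absurd (Finset.mem_union_right _ ht.1) ht.2
  have hUI : I ∩ Smn n n ⊆ (Smn n n).filter (fun t => 0 ≤ A t) := by
    intro t ht
    rw [Finset.mem_inter] at ht
    refine Finset.mem_filter.2 ⟨ht.2, ?_⟩
    rcases hno t ht.1 with h | h <;> omega
  have hcard2 : 2 ≤ (((Smn n n).filter (fun t => A t = 1)) ∩ I ∩ Smn n n).card := by
    refine le_trans hcnt' (Finset.card_le_card ?_)
    intro t ht
    rw [Finset.mem_filter] at ht
    rw [Finset.mem_inter, Finset.mem_inter]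
    exact ⟨⟨Finset.mem_filter.2 ⟨hIS ht.1, ht.2⟩, ht.1⟩, hIS ht.1⟩
  have happ := hstar I hIS (Smn n n) (fun t ht => ht) hDemp hUI
  have hs1 : sigma1 I ≤ 1 := by rw [hI]; exact sigma1_rowIoc_le i a j₀
  have hs2 : sigma2 (Smn n n) ≤ n := sigma2_Smn_le n
  have hcempty : Smn n n \ (I ∪ Smn n n) = ∅ := by
    ext t
    simp only [Finset.mem_sdiff, Finset.notMem_empty, iff_false]
    rintro ⟨h1, h2⟩
    exact h2 (Finset.mem_union_right _ h1)
  rw [hcempty] at happ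
  simp only [Finset.inter_empty, Finset.empty_inter, Finset.card_empty] at happ
  omega

end base

section base2

variable {n : ℕ} {A : ℕ × ℕ → ℤ}

/-- Row lower bound: all horizontal prefix sums are ≥ 0. -/
lemma row_lb (hn : 1 ≤ n)
    (htri : ∀ t ∈ Smn n n, A t = -1 ∨ A t = 0 ∨ A t = 1)
    (hstar : StarCond n A A) :
    ∀ i ∈ Finset.Icc 1 n, ∀ j ∈ Finset.Icc 1 n, 0 ≤ fsum A (hPrefix i j) := by
  intro i hi
  by_contra hc
  push_neg at hc
  obtain ⟨j, hj, hjv⟩ := hc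
  set B := (Finset.Icc 1 n).filter (fun l => fsum A (hPrefix i l) ≤ -1) with hB
  have hBne : B.Nonempty := ⟨j, Finset.mem_filter.2 ⟨hj, by omega⟩⟩
  set j₀ := B.min' hBne with hj₀
  have hj₀B : j₀ ∈ B := Finset.min'_mem _ _
  have hj₀Icc : j₀ ∈ Finset.Icc 1 n := (Finset.mem_filter.1 hj₀B).1
  have hgj₀ : fsum A (hPrefix i j₀) ≤ -1 := (Finset.mem_filter.1 hj₀B).2
  have hj₀1 : 1 ≤ j₀ := (Finset.mem_Icc.1 hj₀Icc).1
  have hj₀n : j₀ ≤ n := (Finset.mem_Icc.1 hj₀Icc).2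
  have hlt : ∀ l, l < j₀ → 0 ≤ fsum A (hPrefix i l) := by
    intro l hl
    rcases Nat.eq_zero_or_pos l with rfl | hl1
    · rw [fsum_hPrefix_zero]
    · by_contra hcl
      have : l ∈ B := Finset.mem_filter.2 ⟨Finset.mem_Icc.2 ⟨hl1, by omega⟩, by omega⟩
      have := Finset.min'_le _ _ this
      omega
  have hmemi : ∀ l, 1 ≤ l → l ≤ n → (i, l) ∈ Smn n n := by
    intro l h1 h2
    rw [Finset.mem_Icc] at hi
    exact mem_Smn.2 ⟨⟨hi.1, hi.2⟩, ⟨h1, h2⟩⟩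
  have hstep : ∀ l, 1 ≤ l → fsum A (hPrefix i l) = fsum A (hPrefix i (l - 1)) + A (i, l) :=
    fun l hl => fsum_hPrefix_pred A i l hl
  have hAj₀ : A (i, j₀) = -1 ∧ fsum A (hPrefix i j₀) = -1 := by
    have h1 := hstep j₀ hj₀1
    have h2 := hlt (j₀ - 1) (by omega)
    rcases htri (i, j₀) (hmemi j₀ hj₀1 hj₀n) with h | h | h <;> omega
  set Pset := (Finset.Icc 1 j₀).filter (fun l => A (i, l) = 1) with hPset
  by_cases hPne : Pset.Nonempty
  · -- there is a +1 before j₀; take the last one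
    set a := Pset.max' hPne with ha
    have haP : a ∈ Pset := Finset.max'_mem _ _
    have haIcc : 1 ≤ a ∧ a ≤ j₀ := Finset.mem_Icc.1 (Finset.mem_filter.1 haP).1
    have hAa : A (i, a) = 1 := (Finset.mem_filter.1 haP).2
    have haj₀ : a < j₀ := by
      rcases Nat.eq_or_lt_of_le haIcc.2 with he | h
      · exfalso; rw [he] at hAa; omega
      · exact h
    have hga : 1 ≤ fsum A (hPrefix i a) := by
      have h1 := hstep a haIcc.1
      have h2 := hlt (a - 1) (by omega)
      omega
    set C := ({i} ×ˢ Finset.Ioc a j₀ : Finset (ℕ × ℕ)) with hC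
    have hCS : C ⊆ Smn n n := rowIoc_subset hi hj₀n
    have hent : ∀ t ∈ C, A t = -1 ∨ A t = 0 := by
      intro t ht
      rw [hC, Finset.mem_product, Finset.mem_singleton, Finset.mem_Ioc] at ht
      have htS : t ∈ Smn n n := hCS (by
        rw [hC, Finset.mem_product, Finset.mem_singleton, Finset.mem_Ioc]; exact ht)
      rcases htri t htS with h | h | h
      · exact Or.inl h
      · exact Or.inr h
      · exfalso
        have : t.2 ∈ Pset := Finset.mem_filter.2
          ⟨Finset.mem_Icc.2 ⟨by omega, ht.2.2⟩, by
            have : t = (i, t.2) := Prod.ext ht.1 rfl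
            rwa [this] at h⟩
        have := Finset.le_max' _ _ this
        omega
    have hsumC : fsum A C ≤ -2 := by
      have := fsum_hPrefix_split A i a j₀ (by omega)
      rw [← hC] at this
      omega
    have hcnt : 2 ≤ ((C.filter (fun t => A t = -1)).card : ℤ) := by
      have := negs_count hent
      omega
    have hcnt' : 2 ≤ (C.filter (fun t => A t = -1)).card := by exact_mod_cast hcnt
    have hD : Smn n n \ ((Smn n n \ C) ∪ ∅) ⊆ (Smn n n).filter (fun t => A t ≤ 0) := by
      rw [sdiff_union_empty C hCS]
      intro t ht
      refine Finset.mem_filter.2 ⟨hCS ht, ?_⟩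
      rcases hent t ht with h | h <;> omega
    have hU : (Smn n n \ C) ∩ ∅ ⊆ (Smn n n).filter (fun t => 0 ≤ A t) := by
      simp
    have happ := hstar (Smn n n \ C) Finset.sdiff_subset ∅ (Finset.empty_subset _) hD hU
    rw [sdiff_union_empty C hCS] at happ
    have hcard : (C.filter (fun t => A t = -1)).card ≤
        (((Smn n n).filter (fun t => A t = -1)) ∩ C).card := by
      refine Finset.card_le_card ?_
      intro t ht
      rw [Finset.mem_filter] at ht
      exact Finset.mem_inter.2 ⟨Finset.mem_filter.2 ⟨hCS ht.1, ht.2⟩, ht.1⟩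
    have hs1 : sigma1 (Smn n n \ C) ≤ n + 1 := by
      rw [hC]; exact sigma1_sdiff_le_general
    have hs2 : sigma2 (∅ : Finset (ℕ × ℕ)) = 0 := sigma2_empty
    simp only [Finset.inter_empty, Finset.card_empty] at happ
    omega
  · -- no +1 at all before j₀
    set C := ({i} ×ˢ Finset.Ioc 0 j₀ : Finset (ℕ × ℕ)) with hC
    have hCS : C ⊆ Smn n n := rowIoc_subset hi hj₀n
    have hent : ∀ t ∈ C, A t = -1 ∨ A t = 0 := by
      intro t ht
      rw [hC, Finset.mem_product, Finset.mem_singleton, Finset.mem_Ioc] at ht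
      have htS : t ∈ Smn n n := hCS (by
        rw [hC, Finset.mem_product, Finset.mem_singleton, Finset.mem_Ioc]; exact ht)
      rcases htri t htS with h | h | h
      · exact Or.inl h
      · exact Or.inr h
      · exfalso
        refine hPne ⟨t.2, Finset.mem_filter.2 ⟨Finset.mem_Icc.2 ⟨by omega, ht.2.2⟩, ?_⟩⟩
        have : t = (i, t.2) := Prod.ext ht.1 rfl
        rwa [this] at h
    have hsumC : fsum A C ≤ -1 := by
      have := fsum_hPrefix_split A i 0 j₀ (by omega)
      rw [← hC, fsum_hPrefix_zero] at this
      omega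
    have hcnt : 1 ≤ ((C.filter (fun t => A t = -1)).card : ℤ) := by
      have := negs_count hent
      omega
    have hcnt' : 1 ≤ (C.filter (fun t => A t = -1)).card := by exact_mod_cast hcnt
    have hD : Smn n n \ ((Smn n n \ C) ∪ ∅) ⊆ (Smn n n).filter (fun t => A t ≤ 0) := by
      rw [sdiff_union_empty C hCS]
      intro t ht
      refine Finset.mem_filter.2 ⟨hCS ht, ?_⟩
      rcases hent t ht with h | h <;> omega
    have hU : (Smn n n \ C) ∩ ∅ ⊆ (Smn n n).filter (fun t => 0 ≤ A t) := by
      simp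
    have happ := hstar (Smn n n \ C) Finset.sdiff_subset ∅ (Finset.empty_subset _) hD hU
    rw [sdiff_union_empty C hCS] at happ
    have hcard : (C.filter (fun t => A t = -1)).card ≤
        (((Smn n n).filter (fun t => A t = -1)) ∩ C).card := by
      refine Finset.card_le_card ?_
      intro t ht
      rw [Finset.mem_filter] at ht
      exact Finset.mem_inter.2 ⟨Finset.mem_filter.2 ⟨hCS ht.1, ht.2⟩, ht.1⟩
    have hs1 : sigma1 (Smn n n \ C) ≤ n := by
      rw [hC]; exact sigma1_sdiff_le_prefix hi hj₀1
    have hs2 : sigma2 (∅ : Finset (ℕ × ℕ)) = 0 := sigma2_empty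
    simp only [Finset.inter_empty, Finset.card_empty] at happ
    omega

/-- Row sums equal 1. -/
lemma row_sum (hn : 1 ≤ n)
    (htri : ∀ t ∈ Smn n n, A t = -1 ∨ A t = 0 ∨ A t = 1)
    (hstar : StarCond n A A) :
    ∀ i ∈ Finset.Icc 1 n, fsum A (hPrefix i n) = 1 := by
  have hub := row_ub hn htri hstar
  have hlb := row_lb hn htri hstar
  intro i hi
  have hnIcc : n ∈ Finset.Icc 1 n := Finset.mem_Icc.2 ⟨hn, le_refl n⟩
  by_contra hne
  have hg0 : fsum A (hPrefix i n) = 0 := by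
    have h1 := hub i hi n hnIcc
    have h2 := hlb i hi n hnIcc
    omega
  have hmemi : ∀ l, 1 ≤ l → l ≤ n → (i, l) ∈ Smn n n := by
    intro l h1 h2
    rw [Finset.mem_Icc] at hi
    exact mem_Smn.2 ⟨⟨hi.1, hi.2⟩, ⟨h1, h2⟩⟩
  have hstep : ∀ l, 1 ≤ l → fsum A (hPrefix i l) = fsum A (hPrefix i (l - 1)) + A (i, l) :=
    fun l hl => fsum_hPrefix_pred A i l hl
  set Pset := (Finset.Icc 1 n).filter (fun l => A (i, l) = 1) with hPset
  by_cases hPne : Pset.Nonempty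
  · set a := Pset.max' hPne with ha
    have haP : a ∈ Pset := Finset.max'_mem _ _
    have haIcc : 1 ≤ a ∧ a ≤ n := Finset.mem_Icc.1 (Finset.mem_filter.1 haP).1
    have hAa : A (i, a) = 1 := (Finset.mem_filter.1 haP).2
    have hga : fsum A (hPrefix i a) = 1 := by
      have h1 := hstep a haIcc.1
      have h2 : 0 ≤ fsum A (hPrefix i (a - 1)) := by
        rcases Nat.eq_zero_or_pos (a - 1) with he | hp
        · rw [he, fsum_hPrefix_zero]
        · exact hlb i hi (a - 1) (Finset.mem_Icc.2 ⟨hp, by omega⟩)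
      have h3 := hub i hi a (Finset.mem_Icc.2 haIcc)
      omega
    have han : a < n := by
      rcases Nat.eq_or_lt_of_le haIcc.2 with he | h
      · exfalso; rw [he] at hga; omega
      · exact h
    set C := ({i} ×ˢ Finset.Ioc a n : Finset (ℕ × ℕ)) with hC
    have hCS : C ⊆ Smn n n := rowIoc_subset hi (le_refl n)
    have hent : ∀ t ∈ C, A t = -1 ∨ A t = 0 := by
      intro t ht
      rw [hC, Finset.mem_product, Finset.mem_singleton, Finset.mem_Ioc] at ht
      have htS : t ∈ Smn n n := hCS (by
        rw [hC, Finset.mem_product, Finset.mem_singleton, Finset.mem_Ioc]; exact ht)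
      rcases htri t htS with h | h | h
      · exact Or.inl h
      · exact Or.inr h
      · exfalso
        have : t.2 ∈ Pset := Finset.mem_filter.2
          ⟨Finset.mem_Icc.2 ⟨by omega, ht.2.2⟩, by
            have : t = (i, t.2) := Prod.ext ht.1 rfl
            rwa [this] at h⟩
        have := Finset.le_max' _ _ this
        omega
    have hsumC : fsum A C = -1 := by
      have := fsum_hPrefix_split A i a n (by omega)
      rw [← hC] at this
      omega
    have hcnt : 1 ≤ ((C.filter (fun t => A t = -1)).card : ℤ) := by
      have := negs_count hent
      omega
    have hcnt' : 1 ≤ (C.filter (fun t => A t = -1)).card := by exact_mod_cast hcnt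
    have hD : Smn n n \ ((Smn n n \ C) ∪ ∅) ⊆ (Smn n n).filter (fun t => A t ≤ 0) := by
      rw [sdiff_union_empty C hCS]
      intro t ht
      refine Finset.mem_filter.2 ⟨hCS ht, ?_⟩
      rcases hent t ht with h | h <;> omega
    have hU : (Smn n n \ C) ∩ ∅ ⊆ (Smn n n).filter (fun t => 0 ≤ A t) := by simp
    have happ := hstar (Smn n n \ C) Finset.sdiff_subset ∅ (Finset.empty_subset _) hD hU
    rw [sdiff_union_empty C hCS] at happ
    have hcard : (C.filter (fun t => A t = -1)).card ≤
        (((Smn n n).filter (fun t => A t = -1)) ∩ C).card := by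
      refine Finset.card_le_card ?_
      intro t ht
      rw [Finset.mem_filter] at ht
      exact Finset.mem_inter.2 ⟨Finset.mem_filter.2 ⟨hCS ht.1, ht.2⟩, ht.1⟩
    have hs1 : sigma1 (Smn n n \ C) ≤ n := by
      rw [hC]; exact sigma1_sdiff_le_suffix
    have hs2 : sigma2 (∅ : Finset (ℕ × ℕ)) = 0 := sigma2_empty
    simp only [Finset.inter_empty, Finset.card_empty] at happ
    omega
  · -- all-zero row
    set C := ({i} ×ˢ Finset.Ioc 0 n : Finset (ℕ × ℕ)) with hC
    have hCS : C ⊆ Smn n n := rowIoc_subset hi (le_refl n)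
    have hent : ∀ t ∈ C, A t = -1 ∨ A t = 0 := by
      intro t ht
      rw [hC, Finset.mem_product, Finset.mem_singleton, Finset.mem_Ioc] at ht
      have htS : t ∈ Smn n n := hCS (by
        rw [hC, Finset.mem_product, Finset.mem_singleton, Finset.mem_Ioc]; exact ht)
      rcases htri t htS with h | h | h
      · exact Or.inl h
      · exact Or.inr h
      · exfalso
        refine hPne ⟨t.2, Finset.mem_filter.2 ⟨Finset.mem_Icc.2 ⟨by omega, ht.2.2⟩, ?_⟩⟩
        have : t = (i, t.2) := Prod.ext ht.1 rfl
        rwa [this] at h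
    have hD : Smn n n \ ((Smn n n \ C) ∪ ∅) ⊆ (Smn n n).filter (fun t => A t ≤ 0) := by
      rw [sdiff_union_empty C hCS]
      intro t ht
      refine Finset.mem_filter.2 ⟨hCS ht, ?_⟩
      rcases hent t ht with h | h <;> omega
    have hU : (Smn n n \ C) ∩ ∅ ⊆ (Smn n n).filter (fun t => 0 ≤ A t) := by simp
    have happ := hstar (Smn n n \ C) Finset.sdiff_subset ∅ (Finset.empty_subset _) hD hU
    have hs1 : sigma1 (Smn n n \ C) ≤ n - 1 := by
      rw [hC]; exact sigma1_sdiff_le_row hi hn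
    have hs2 : sigma2 (∅ : Finset (ℕ × ℕ)) = 0 := sigma2_empty
    simp only [Finset.inter_empty, Finset.card_empty] at happ
    omega

end base2

section swapstar

variable {n : ℕ} {A : ℕ × ℕ → ℤ}

lemma mem_Smn_swap {t : ℕ × ℕ} : t.swap ∈ Smn n n ↔ t ∈ Smn n n := by
  rw [mem_Smn, mem_Smn]
  exact ⟨fun h => ⟨h.2, h.1⟩, fun h => ⟨h.2, h.1⟩⟩

lemma image_swap_sdiff_union (Y₁ Y₂ : Finset (ℕ × ℕ)) :
    (Smn n n \ (Y₁ ∪ Y₂)).image Prod.swap =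
      Smn n n \ (Y₂.image Prod.swap ∪ Y₁.image Prod.swap) := by
  ext u
  rw [mem_image_swap, Finset.mem_sdiff, Finset.mem_sdiff, Finset.mem_union, Finset.mem_union,
    mem_image_swap, mem_image_swap, mem_Smn_swap]
  tauto

lemma card_swap_pair (c : ℤ) (W : Finset (ℕ × ℕ)) :
    (((Smn n n).filter (fun t => A t.swap = c)) ∩ W).card =
      (((Smn n n).filter (fun t => A t = c)) ∩ (W.image Prod.swap)).card := by
  refine Finset.card_nbij' Prod.swap Prod.swap ?_ ?_ ?_ ?_
  · intro u hu
    rw [Finset.mem_coe, Finset.mem_inter, Finset.mem_filter] at hu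
    rw [Finset.mem_coe, Finset.mem_inter, Finset.mem_filter, mem_Smn_swap, mem_image_swap, Prod.swap_swap]
    exact ⟨⟨hu.1.1, hu.1.2⟩, hu.2⟩
  · intro u hu
    rw [Finset.mem_coe, Finset.mem_inter, Finset.mem_filter, mem_image_swap] at hu
    rw [Finset.mem_coe, Finset.mem_inter, Finset.mem_filter, mem_Smn_swap, Prod.swap_swap]
    exact ⟨⟨hu.1.1, hu.1.2⟩, hu.2⟩
  · intro u _; exact Prod.swap_swap u
  · intro u _; exact Prod.swap_swap u

lemma star_swap (h : StarCond n A A) :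
    StarCond n (fun t => A t.swap) (fun t => A t.swap) := by
  intro Y₁ hY₁ Y₂ hY₂ hD hU
  have happ := h (Y₂.image Prod.swap) (image_swap_subset_Smn hY₂)
    (Y₁.image Prod.swap) (image_swap_subset_Smn hY₁) ?_ ?_
  · -- convert the conclusion
    have hσ1 : sigma1 (Y₂.image Prod.swap) = sigma2 Y₂ := (sigma2_eq_sigma1_swap Y₂).symm
    have hσ2 : sigma2 (Y₁.image Prod.swap) = sigma1 Y₁ := (sigma1_eq_sigma2_swap Y₁).symm
    have hc1 : ((Smn n n).filter (fun t => A t.swap = -1) ∩ (Smn n n \ (Y₁ ∪ Y₂))).card =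
        ((Smn n n).filter (fun t => A t = -1) ∩
          (Smn n n \ (Y₂.image Prod.swap ∪ Y₁.image Prod.swap))).card := by
      rw [card_swap_pair, image_swap_sdiff_union]
    have hc2 : ((Smn n n).filter (fun t => A t.swap = 1) ∩ Y₁ ∩ Y₂).card =
        ((Smn n n).filter (fun t => A t = 1) ∩ Y₂.image Prod.swap ∩ Y₁.image Prod.swap).card := by
      rw [Finset.inter_assoc, Finset.inter_assoc, card_swap_pair]
      congr 2
      ext u
      rw [mem_image_swap, Finset.mem_inter, Finset.mem_inter, mem_image_swap, mem_image_swap]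
      tauto
    rw [hc1, hc2]
    omega
  · intro t ht
    rw [Finset.mem_sdiff, Finset.mem_union, mem_image_swap, mem_image_swap] at ht
    push_neg at ht
    have hts : t.swap ∈ Smn n n \ (Y₁ ∪ Y₂) := by
      rw [Finset.mem_sdiff, Finset.mem_union]
      push_neg
      exact ⟨mem_Smn_swap.1 ht.1, ht.2.2, ht.2.1⟩
    have := Finset.mem_filter.1 (hD hts)
    simp only [Prod.swap_swap] at this
    exact Finset.mem_filter.2 ⟨ht.1, this.2⟩
  · intro t ht
    rw [Finset.mem_inter, mem_image_swap, mem_image_swap] at ht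
    have hts : t.swap ∈ Y₁ ∩ Y₂ := Finset.mem_inter.2 ⟨ht.2, ht.1⟩
    have := Finset.mem_filter.1 (hU hts)
    simp only [Prod.swap_swap] at this
    exact Finset.mem_filter.2 ⟨mem_Smn_swap.1 this.1, this.2⟩

lemma col_claims (hn : 1 ≤ n)
    (htri : ∀ t ∈ Smn n n, A t = -1 ∨ A t = 0 ∨ A t = 1)
    (hstar : StarCond n A A) :
    (∀ i ∈ Finset.Icc 1 n, ∀ j ∈ Finset.Icc 1 n,
      0 ≤ fsum A (vPrefix i j) ∧ fsum A (vPrefix i j) ≤ 1) ∧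
    (∀ j ∈ Finset.Icc 1 n, fsum A (vPrefix n j) = 1) := by
  have htri' : ∀ t ∈ Smn n n, A t.swap = -1 ∨ A t.swap = 0 ∨ A t.swap = 1 := by
    intro t ht
    exact htri t.swap (mem_Smn_swap.2 ht)
  have hstar' := star_swap hstar
  have hub := row_ub hn htri' hstar'
  have hlb := row_lb hn htri' hstar'
  have hsum := row_sum hn htri' hstar'
  constructor
  · intro i hi j hj
    have h1 := hlb j hj i hi
    have h2 := hub j hj i hi
    rw [fsum_vPrefix_eq_swap] at h1 h2
    exact ⟨h1, h2⟩
  · intro j hj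
    have h1 := hsum j hj
    rwa [fsum_vPrefix_eq_swap] at h1

lemma base_ASM (hn : 1 ≤ n)
    (htri : ∀ t ∈ Smn n n, A t = -1 ∨ A t = 0 ∨ A t = 1)
    (hstar : StarCond n A A) : IsASM n A := by
  have hub := row_ub hn htri hstar
  have hlb := row_lb hn htri hstar
  have hsum := row_sum hn htri hstar
  have hcol := col_claims hn htri hstar
  refine ⟨?_, hsum, hcol.2⟩
  intro i hi j hj
  constructor
  · have h1 := hlb i hi j hj
    have h2 := hub i hi j hj
    omega
  · have h := hcol.1 i hi j hj
    omega

lemma StarCond_congr {lo hi lo2 hi2 : ℕ × ℕ → ℤ}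
    (hl : ∀ t ∈ Smn n n, lo t = lo2 t) (hh : ∀ t ∈ Smn n n, hi t = hi2 t)
    (h : StarCond n lo hi) : StarCond n lo2 hi2 := by
  have e1 : (Smn n n).filter (fun t => hi2 t ≤ 0) = (Smn n n).filter (fun t => hi t ≤ 0) :=
    Finset.filter_congr (fun t ht => by rw [hh t ht])
  have e2 : (Smn n n).filter (fun t => 0 ≤ lo2 t) = (Smn n n).filter (fun t => 0 ≤ lo t) :=
    Finset.filter_congr (fun t ht => by rw [hl t ht])
  have e3 : (Smn n n).filter (fun t => hi2 t = -1) = (Smn n n).filter (fun t => hi t = -1) :=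
    Finset.filter_congr (fun t ht => by rw [hh t ht])
  have e4 : (Smn n n).filter (fun t => lo2 t = 1) = (Smn n n).filter (fun t => lo t = 1) :=
    Finset.filter_congr (fun t ht => by rw [hl t ht])
  intro X₁ h1 X₂ h2 hD hU
  rw [e1] at hD
  rw [e2] at hU
  rw [e3, e4]
  exact h X₁ h1 X₂ h2 hD hU

lemma entries_bound (hA : IsASM n A) :
    ∀ t ∈ Smn n n, -1 ≤ A t ∧ A t ≤ 1 := by
  intro t ht
  have htS := mem_Smn.1 ht
  have hstep := fsum_hPrefix_pred A t.1 t.2 htS.2.1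
  rw [Prod.mk.eta] at hstep
  have h1 : 0 ≤ fsum A (hPrefix t.1 t.2) ∧ fsum A (hPrefix t.1 t.2) ≤ 1 := by
    rcases (hA.1 t.1 (Finset.mem_Icc.2 htS.1) t.2 (Finset.mem_Icc.2 htS.2)).1 with h | h <;>
      omega
  have h2 : 0 ≤ fsum A (hPrefix t.1 (t.2 - 1)) ∧ fsum A (hPrefix t.1 (t.2 - 1)) ≤ 1 := by
    rcases Nat.eq_or_lt_of_le htS.2.1 with he | hlt2
    · rw [← he, fsum_hPrefix_zero]; omega
    · rcases (hA.1 t.1 (Finset.mem_Icc.2 htS.1) (t.2 - 1)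
        (Finset.mem_Icc.2 ⟨by omega, by omega⟩)).1 with h | h <;> omega
  omega

end swapstar

section mainlemma

lemma main_exists (n : ℕ) (hn : 1 ≤ n) :
    ∀ m : ℕ, ∀ lo hi : ℕ × ℕ → ℤ,
      (∀ t ∈ Smn n n, -1 ≤ lo t) → (∀ t ∈ Smn n n, hi t ≤ 1) →
      (∀ t ∈ Smn n n, lo t ≤ hi t) →
      (∑ t ∈ Smn n n, (hi t - lo t).toNat) = m → StarCond n lo hi →
      ∃ A, IsASM n A ∧ ∀ t ∈ Smn n n, lo t ≤ A t ∧ A t ≤ hi t := by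
  intro m
  induction m using Nat.strong_induction_on with
  | _ m ih =>
    intro lo hi hlo hhi hlh hm hstar
    by_cases hall : ∀ t ∈ Smn n n, hi t ≤ lo t
    · -- base case : lo = hi on the grid
      have htri : ∀ t ∈ Smn n n, lo t = -1 ∨ lo t = 0 ∨ lo t = 1 := by
        intro t ht
        have h1 := hlo t ht
        have h2 := hhi t ht
        have h3 := hlh t ht
        omega
      have hstar' : StarCond n lo lo :=
        StarCond_congr (fun t _ => rfl) (fun t ht => le_antisymm (hall t ht) (hlh t ht)) hstar
      exact ⟨lo, base_ASM hn htri hstar',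
        fun t ht => ⟨le_refl _, le_trans (hlh t ht) (by omega)⟩⟩
    · push_neg at hall
      obtain ⟨s, hsS, hs⟩ := hall
      have hmpos : 1 ≤ m := by
        have h1 : 1 ≤ (hi s - lo s).toNat := by omega
        have h2 : (hi s - lo s).toNat ≤ ∑ t ∈ Smn n n, (hi t - lo t).toNat :=
          Finset.single_le_sum (f := fun t => (hi t - lo t).toNat)
            (fun t _ => Nat.zero_le _) hsS
        omega
      rcases refine_step hlh hlo hhi hsS hs hstar with hup | hdown
      · set lo' := Function.update lo s (lo s + 1) with hlo'
        have hmeas : (∑ t ∈ Smn n n, (hi t - lo' t).toNat) = m - 1 := by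
          have e1 : ∑ t ∈ (Smn n n).erase s, (hi t - lo' t).toNat =
              ∑ t ∈ (Smn n n).erase s, (hi t - lo t).toNat := by
            refine Finset.sum_congr rfl fun t ht => ?_
            rw [hlo', Function.update_of_ne (Finset.ne_of_mem_erase ht)]
          have e2 : ∑ t ∈ (Smn n n).erase s, (hi t - lo' t).toNat + (hi s - lo' s).toNat =
              ∑ t ∈ Smn n n, (hi t - lo' t).toNat := Finset.sum_erase_add _ _ hsS
          have e3 : ∑ t ∈ (Smn n n).erase s, (hi t - lo t).toNat + (hi s - lo s).toNat =
              ∑ t ∈ Smn n n, (hi t - lo t).toNat := Finset.sum_erase_add _ _ hsS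
          have e4 : (hi s - lo' s).toNat = (hi s - lo s).toNat - 1 := by
            rw [hlo', Function.update_self]
            omega
          have h1 : 1 ≤ (hi s - lo s).toNat := by omega
          omega
        obtain ⟨A, hA1, hA2⟩ := ih (m - 1) (by omega) lo' hi
          (by
            intro t ht
            by_cases hts : t = s
            · rw [hts, hlo', Function.update_self]
              have := hlo s hsS
              omega
            · rw [hlo', Function.update_of_ne hts]
              exact hlo t ht)
          hhi
          (by
            intro t ht
            by_cases hts : t = s
            · rw [hts, hlo', Function.update_self]
              omega
            · rw [hlo', Function.update_of_ne hts]
              exact hlh t ht)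
          hmeas hup
        refine ⟨A, hA1, fun t ht => ⟨?_, (hA2 t ht).2⟩⟩
        have := (hA2 t ht).1
        by_cases hts : t = s
        · rw [hts] at this ⊢
          rw [hlo', Function.update_self] at this
          omega
        · rwa [hlo', Function.update_of_ne hts] at this
      · set hi' := Function.update hi s (hi s - 1) with hhi'
        have hmeas : (∑ t ∈ Smn n n, (hi' t - lo t).toNat) = m - 1 := by
          have e1 : ∑ t ∈ (Smn n n).erase s, (hi' t - lo t).toNat =
              ∑ t ∈ (Smn n n).erase s, (hi t - lo t).toNat := by
            refine Finset.sum_congr rfl fun t ht => ?_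
            rw [hhi', Function.update_of_ne (Finset.ne_of_mem_erase ht)]
          have e2 : ∑ t ∈ (Smn n n).erase s, (hi' t - lo t).toNat + (hi' s - lo s).toNat =
              ∑ t ∈ Smn n n, (hi' t - lo t).toNat := Finset.sum_erase_add _ _ hsS
          have e3 : ∑ t ∈ (Smn n n).erase s, (hi t - lo t).toNat + (hi s - lo s).toNat =
              ∑ t ∈ Smn n n, (hi t - lo t).toNat := Finset.sum_erase_add _ _ hsS
          have e4 : (hi' s - lo s).toNat = (hi s - lo s).toNat - 1 := by
            rw [hhi', Function.update_self]
            omega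
          have h1 : 1 ≤ (hi s - lo s).toNat := by omega
          omega
        obtain ⟨A, hA1, hA2⟩ := ih (m - 1) (by omega) lo hi'
          hlo
          (by
            intro t ht
            by_cases hts : t = s
            · rw [hts, hhi', Function.update_self]
              have := hhi s hsS
              omega
            · rw [hhi', Function.update_of_ne hts]
              exact hhi t ht)
          (by
            intro t ht
            by_cases hts : t = s
            · rw [hts, hhi', Function.update_self]
              omega
            · rw [hhi', Function.update_of_ne hts]
              exact hlh t ht)
          hmeas hdown
        refine ⟨A, hA1, fun t ht => ⟨(hA2 t ht).1, ?_⟩⟩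
        have := (hA2 t ht).2
        by_cases hts : t = s
        · rw [hts] at this ⊢
          rw [hhi', Function.update_self] at this
          omega
        · rwa [hhi', Function.update_of_ne hts] at this

end mainlemma

/-- existence of an S-compatible alternating sign matrix for a
partition {S₀, S₊₁, S₋₁, S₊, S₋, S_F} of S_{n,n} (Theorem AS-feas2). -/
theorem stmt_17 (n : ℕ) (hn : 1 ≤ n)
    (S0 Sp1 Sm1 Sp Sm SF : Finset (ℕ × ℕ))
    (hcover : S0 ∪ Sp1 ∪ Sm1 ∪ Sp ∪ Sm ∪ SF = Smn n n)
    (hdisj : List.Pairwise Disjoint [S0, Sp1, Sm1, Sp, Sm, SF]) :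
    (∃ A : ℕ × ℕ → ℤ, IsASM n A ∧
        (∀ s ∈ S0, A s = 0) ∧ (∀ s ∈ Sp1, A s = 1) ∧ (∀ s ∈ Sm1, A s = -1) ∧
        (∀ s ∈ Sp, 0 ≤ A s) ∧ (∀ s ∈ Sm, A s ≤ 0)) ↔
      (∀ X₁ ⊆ Smn n n, ∀ X₂ ⊆ Smn n n,
        Smn n n \ (X₁ ∪ X₂) ⊆ S0 ∪ Sm1 ∪ Sm →
        X₁ ∩ X₂ ⊆ S0 ∪ Sp1 ∪ Sp →
        n + (Sm1 ∩ (Smn n n \ (X₁ ∪ X₂))).card + (Sp1 ∩ X₁ ∩ X₂).card ≤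
          sigma1 X₁ + sigma2 X₂) := by
  classical
  simp only [List.pairwise_cons, List.mem_cons, List.mem_singleton, List.not_mem_nil,
    forall_eq_or_imp, forall_eq, List.Pairwise.nil, and_true, IsEmpty.forall_iff,
    List.not_mem_nil] at hdisj
  obtain ⟨⟨d01, d02, d03, d04, d05⟩, ⟨d12, d13, d14, d15⟩, ⟨d23, d24, d25⟩,
    ⟨d34, d35⟩, d45⟩ := hdisj
  have dm : ∀ {U V : Finset (ℕ × ℕ)}, Disjoint U V → ∀ ⦃t⦄, t ∈ U → t ∉ V :=
    fun hUV _ ht => Finset.disjoint_left.1 hUV ht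
  have hsub : ∀ t, (t ∈ S0 ∨ t ∈ Sp1 ∨ t ∈ Sm1 ∨ t ∈ Sp ∨ t ∈ Sm ∨ t ∈ SF) ↔
      t ∈ Smn n n := by
    intro t
    rw [← hcover]
    simp only [Finset.mem_union]
    tauto
  set lo : ℕ × ℕ → ℤ := fun t => if t ∈ Sp1 then 1 else if t ∈ S0 ∨ t ∈ Sp then 0 else -1
    with hlodef
  set hi : ℕ × ℕ → ℤ := fun t => if t ∈ Sm1 then -1 else if t ∈ S0 ∨ t ∈ Sm then 0 else 1
    with hhidef
  have hv0 : ∀ t ∈ S0, lo t = 0 ∧ hi t = 0 := by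
    intro t ht
    rw [hlodef, hhidef]
    simp only []
    rw [if_neg (dm d01 ht), if_pos (Or.inl ht), if_neg (fun h => dm d02 ht h),
      if_pos (Or.inl ht)]
    exact ⟨rfl, rfl⟩
  have hv1 : ∀ t ∈ Sp1, lo t = 1 ∧ hi t = 1 := by
    intro t ht
    rw [hlodef, hhidef]
    simp only []
    rw [if_pos ht, if_neg (fun h => dm d12 ht h), if_neg]
    · exact ⟨rfl, rfl⟩
    · rintro (h | h)
      · exact dm d01 h ht
      · exact dm d14 ht h
  have hv2 : ∀ t ∈ Sm1, lo t = -1 ∧ hi t = -1 := by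
    intro t ht
    rw [hlodef, hhidef]
    simp only []
    rw [if_neg (fun h => dm d12 h ht), if_neg, if_pos ht]
    · exact ⟨rfl, rfl⟩
    · rintro (h | h)
      · exact dm d02 h ht
      · exact dm d23 ht h
  have hv3 : ∀ t ∈ Sp, lo t = 0 ∧ hi t = 1 := by
    intro t ht
    rw [hlodef, hhidef]
    simp only []
    rw [if_neg (fun h => dm d13 h ht), if_pos (Or.inr ht), if_neg (fun h => dm d23 h ht),
      if_neg]
    · exact ⟨rfl, rfl⟩
    · rintro (h | h)
      · exact dm d03 h ht
      · exact dm d34 ht h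
  have hv4 : ∀ t ∈ Sm, lo t = -1 ∧ hi t = 0 := by
    intro t ht
    rw [hlodef, hhidef]
    simp only []
    rw [if_neg (fun h => dm d14 h ht), if_neg, if_neg (fun h => dm d24 h ht),
      if_pos (Or.inr ht)]
    · exact ⟨rfl, rfl⟩
    · rintro (h | h)
      · exact dm d04 h ht
      · exact dm d34 h ht
  have hv5 : ∀ t ∈ SF, lo t = -1 ∧ hi t = 1 := by
    intro t ht
    rw [hlodef, hhidef]
    simp only []
    rw [if_neg (fun h => dm d15.1 h ht), if_neg, if_neg (fun h => dm d25.1 h ht), if_neg]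
    · exact ⟨rfl, rfl⟩
    · rintro (h | h)
      · exact dm d05.1 h ht
      · exact dm d45.1.1 h ht
    · rintro (h | h)
      · exact dm d05.1 h ht
      · exact dm d35.1 h ht
  have hlo : ∀ t ∈ Smn n n, -1 ≤ lo t := by
    intro t ht
    rcases (hsub t).2 ht with h | h | h | h | h | h
    · have := hv0 t h; omega
    · have := hv1 t h; omega
    · have := hv2 t h; omega
    · have := hv3 t h; omega
    · have := hv4 t h; omega
    · have := hv5 t h; omega
  have hhi : ∀ t ∈ Smn n n, hi t ≤ 1 := by
    intro t ht
    rcases (hsub t).2 ht with h | h | h | h | h | h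
    · have := hv0 t h; omega
    · have := hv1 t h; omega
    · have := hv2 t h; omega
    · have := hv3 t h; omega
    · have := hv4 t h; omega
    · have := hv5 t h; omega
  have hlh : ∀ t ∈ Smn n n, lo t ≤ hi t := by
    intro t ht
    rcases (hsub t).2 ht with h | h | h | h | h | h
    · have := hv0 t h; omega
    · have := hv1 t h; omega
    · have := hv2 t h; omega
    · have := hv3 t h; omega
    · have := hv4 t h; omega
    · have := hv5 t h; omega
  have eM : (Smn n n).filter (fun t => hi t = -1) = Sm1 := by
    ext t
    rw [Finset.mem_filter]
    constructor
    · rintro ⟨ht, hv⟩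
      rcases (hsub t).2 ht with h | h | h | h | h | h
      · have := hv0 t h; omega
      · have := hv1 t h; omega
      · exact h
      · have := hv3 t h; omega
      · have := hv4 t h; omega
      · have := hv5 t h; omega
    · intro h
      exact ⟨(hsub t).1 (Or.inr (Or.inr (Or.inl h))), (hv2 t h).2⟩
  have eP : (Smn n n).filter (fun t => lo t = 1) = Sp1 := by
    ext t
    rw [Finset.mem_filter]
    constructor
    · rintro ⟨ht, hv⟩
      rcases (hsub t).2 ht with h | h | h | h | h | h
      · have := hv0 t h; omega
      · exact h
      · have := hv2 t h; omega
      · have := hv3 t h; omega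
      · have := hv4 t h; omega
      · have := hv5 t h; omega
    · intro h
      exact ⟨(hsub t).1 (Or.inr (Or.inl h)), (hv1 t h).1⟩
  have eD : ∀ t, t ∈ (Smn n n).filter (fun u => hi u ≤ 0) ↔ t ∈ S0 ∪ Sm1 ∪ Sm := by
    intro t
    rw [Finset.mem_filter]
    simp only [Finset.mem_union]
    constructor
    · rintro ⟨ht, hv⟩
      rcases (hsub t).2 ht with h | h | h | h | h | h
      · exact Or.inl (Or.inl h)
      · have := hv1 t h; omega
      · exact Or.inl (Or.inr h)
      · have := hv3 t h; omega
      · exact Or.inr h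
      · have := hv5 t h; omega
    · rintro ((h | h) | h)
      · exact ⟨(hsub t).1 (Or.inl h), by have := hv0 t h; omega⟩
      · exact ⟨(hsub t).1 (Or.inr (Or.inr (Or.inl h))), by have := hv2 t h; omega⟩
      · exact ⟨(hsub t).1 (Or.inr (Or.inr (Or.inr (Or.inr (Or.inl h))))),
          by have := hv4 t h; omega⟩
  have eU : ∀ t, t ∈ (Smn n n).filter (fun u => 0 ≤ lo u) ↔ t ∈ S0 ∪ Sp1 ∪ Sp := by
    intro t
    rw [Finset.mem_filter]
    simp only [Finset.mem_union]
    constructor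
    · rintro ⟨ht, hv⟩
      rcases (hsub t).2 ht with h | h | h | h | h | h
      · exact Or.inl (Or.inl h)
      · exact Or.inl (Or.inr h)
      · have := hv2 t h; omega
      · exact Or.inr h
      · have := hv4 t h; omega
      · have := hv5 t h; omega
    · rintro ((h | h) | h)
      · exact ⟨(hsub t).1 (Or.inl h), by have := hv0 t h; omega⟩
      · exact ⟨(hsub t).1 (Or.inr (Or.inl h)), by have := hv1 t h; omega⟩
      · exact ⟨(hsub t).1 (Or.inr (Or.inr (Or.inr (Or.inl h)))),
          by have := hv3 t h; omega⟩
  constructor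
  · rintro ⟨A, hASM, h0, h1, hm1, hp, hm⟩ X₁ hX₁ X₂ hX₂ hD hU
    have hb := entries_bound hASM
    have hcomp : ∀ t ∈ Smn n n, lo t ≤ A t ∧ A t ≤ hi t := by
      intro t ht
      have hbt := hb t ht
      rcases (hsub t).2 ht with h | h | h | h | h | h
      · have := hv0 t h; have := h0 t h; omega
      · have := hv1 t h; have := h1 t h; omega
      · have := hv2 t h; have := hm1 t h; omega
      · have := hv3 t h; have := hp t h; omega
      · have := hv4 t h; have := hm t h; omega
      · have := hv5 t h; omega
    have hstar := forward_star hASM hcomp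
    have happ := hstar X₁ hX₁ X₂ hX₂ (fun t ht => (eD t).2 (hD ht))
      (fun t ht => (eU t).2 (hU ht))
    rwa [eM, eP] at happ
  · intro hrhs
    have hstar : StarCond n lo hi := by
      intro X₁ hX₁ X₂ hX₂ hD hU
      have h := hrhs X₁ hX₁ X₂ hX₂ (fun t ht => (eD t).1 (hD ht))
        (fun t ht => (eU t).1 (hU ht))
      rwa [eM, eP]
    obtain ⟨A, hASM, hcomp⟩ := main_exists n hn (∑ t ∈ Smn n n, (hi t - lo t).toNat)
      lo hi hlo hhi hlh rfl hstar
    refine ⟨A, hASM, ?_, ?_, ?_, ?_, ?_⟩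
    · intro t ht
      have h := hcomp t ((hsub t).1 (Or.inl ht))
      have := hv0 t ht
      omega
    · intro t ht
      have h := hcomp t ((hsub t).1 (Or.inr (Or.inl ht)))
      have := hv1 t ht
      omega
    · intro t ht
      have h := hcomp t ((hsub t).1 (Or.inr (Or.inr (Or.inl ht))))
      have := hv2 t ht
      omega
    · intro t ht
      have h := hcomp t ((hsub t).1 (Or.inr (Or.inr (Or.inr (Or.inl ht)))))
      have := hv3 t ht
      omega
    · intro t ht
      have h := hcomp t ((hsub t).1 (Or.inr (Or.inr (Or.inr (Or.inr (Or.inl ht))))))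
      have := hv4 t ht
      omega
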